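/- arXiv:math/0601696 — 10 statements merged into one kernel-verified Lean document; each statement's English description precedes it below -/
import Mathlib

section
/- Let A be a bounded linear operator on a Hilbert space H, T = A*A, and a > 0. Then the operator norm of T_a^{-1} A* satisfies ‖(T + aI)^{-1} A*‖ ≤ 1/(2√a). -/
open ContinuousLinearMap

/-- For a bounded linear operator `A` on a complex Hilbert space, `T = A* A` and `a > 0`,
the operator `(T + aI)⁻¹ A*` has norm at most `1/(2√a)`. -/
theorem norm_Tainv_adjoint_le
    {H : Type*} [NormedAddCommGroup H] [InnerProductSpace ℂ H] [CompleteSpace H]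
    (A : H →L[ℂ] H) (a : ℝ) (ha : 0 < a)
    (T : H →L[ℂ] H) (hT : T = (adjoint A) ∘L A)
    (B : H →L[ℂ] H)
    (hB₁ : B ∘L (T + (a : ℂ) • 1) = 1) (hB₂ : (T + (a : ℂ) • 1) ∘L B = 1) :
    ‖B ∘L adjoint A‖ ≤ 1 / (2 * Real.sqrt a) := by
  have hsa : 0 < Real.sqrt a := Real.sqrt_pos.2 ha
  apply opNorm_le_bound _ (by positivity)
  intro x
  set y := B ((adjoint A) x) with hy
  have hTy : T y + (a : ℂ) • y = (adjoint A) x := by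
    have := congrArg (fun f => f ((adjoint A) x)) hB₂
    simpa using this
  have key : ‖A y‖ ^ 2 + a * ‖y‖ ^ 2 ≤ ‖x‖ * ‖A y‖ := by
    have h1 : (inner ℂ (T y + (a : ℂ) • y) y : ℂ) = inner ℂ x (A y) := by
      rw [hTy, adjoint_inner_left]
    have h2 : (inner ℂ (T y + (a : ℂ) • y) y : ℂ)
        = ((‖A y‖ ^ 2 + a * ‖y‖ ^ 2 : ℝ) : ℂ) := by
      rw [inner_add_left, inner_smul_left, hT, comp_apply, adjoint_inner_left,
        inner_self_eq_norm_sq_to_K, inner_self_eq_norm_sq_to_K]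
      push_cast
      ring_nf
      simp
    have h3 : (‖A y‖ ^ 2 + a * ‖y‖ ^ 2 : ℝ) = Complex.re (inner ℂ x (A y) : ℂ) := by
      rw [← h1, h2, Complex.ofReal_re]
    rw [h3]
    calc Complex.re (inner ℂ x (A y) : ℂ) ≤ ‖(inner ℂ x (A y) : ℂ)‖ := Complex.re_le_norm _
      _ ≤ ‖x‖ * ‖A y‖ := norm_inner_le_norm _ _
  have hamgm : 2 * Real.sqrt a * ‖y‖ * ‖A y‖ ≤ ‖A y‖ ^ 2 + a * ‖y‖ ^ 2 := by
    nlinarith [sq_nonneg (‖A y‖ - Real.sqrt a * ‖y‖), Real.sq_sqrt ha.le]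
  rcases eq_or_lt_of_le (norm_nonneg (A y)) with h0 | h0
  · rw [← h0] at key
    have h5 : a * ‖y‖ ^ 2 ≤ 0 := by simpa using key
    have h6 : ‖y‖ ^ 2 = 0 := le_antisymm (by nlinarith) (sq_nonneg _)
    have hy0 : ‖y‖ = 0 := by
      have := sq_eq_zero_iff.mp h6
      simpa using this
    rw [comp_apply, ← hy, hy0]
    positivity
  · have h4 : 2 * Real.sqrt a * ‖y‖ ≤ ‖x‖ := by
      have := le_trans hamgm key
      exact le_of_mul_le_mul_right (by linarith [this]) h0
    rw [comp_apply, ← hy]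
    rw [div_mul_eq_mul_div, one_mul, le_div_iff₀ (by positivity)]
    linarith
end

section
/- Let T ≥ 0 be a bounded selfadjoint operator on a Hilbert space H and y ∈ H. Then lim_{a→0+} ‖a (T + aI)^{-1} y − P_N y‖ = 0, where P_N is the orthogonal projection onto N(T). In particular, if y ⊥ N(T), then lim_{a→0+} a‖(T + aI)^{-1} y‖ = 0. -/
open ContinuousLinearMap Filter Topology

/-- For nonnegative bounded selfadjoint `T`, `a(T+aI)⁻¹ y → P_N y` as `a → 0⁺`, where
`P_N` is the orthogonal projection onto `N(T)`; in particular if `y ⊥ N(T)` then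
`a‖(T+aI)⁻¹ y‖ → 0`. -/
theorem tendsto_a_Tainv_to_proj
    {H : Type*} [NormedAddCommGroup H] [InnerProductSpace ℂ H] [CompleteSpace H]
    (T : H →L[ℂ] H) (hT : IsSelfAdjoint T)
    (hpos : ∀ x : H, 0 ≤ (inner ℂ (T x) x : ℂ).re)
    (P : H →L[ℂ] H)
    (hP : ∀ x : H, T (P x) = 0 ∧ ∀ u : H, T u = 0 → (inner ℂ u (x - P x) : ℂ) = 0)
    (y : H)
    (B : ℝ → H →L[ℂ] H)
    (hB : ∀ a : ℝ, 0 < a →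
      B a ∘L (T + (a : ℂ) • 1) = 1 ∧ (T + (a : ℂ) • 1) ∘L B a = 1) :
    Tendsto (fun a : ℝ => ‖(a : ℂ) • B a y - P y‖) (𝓝[>] 0) (𝓝 0) ∧
    ((∀ u : H, T u = 0 → (inner ℂ u y : ℂ) = 0) →
      Tendsto (fun a : ℝ => a * ‖B a y‖) (𝓝[>] 0) (𝓝 0)) := by
  -- Basic bound : a * ‖B a x‖ ≤ ‖x‖
  have key : ∀ a : ℝ, 0 < a → ∀ x : H, a * ‖B a x‖ ≤ ‖x‖ := by
    intro a ha x
    set u := B a x with hu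
    have hux : T u + (a : ℂ) • u = x := by
      have := congrArg (fun S : H →L[ℂ] H => S x) (hB a ha).2
      simpa [ContinuousLinearMap.comp_apply, ContinuousLinearMap.add_apply] using this
    have h1 : a * (‖u‖ * ‖u‖) ≤ (inner ℂ x u : ℂ).re := by
      have : (inner ℂ x u : ℂ).re = (inner ℂ (T u) u : ℂ).re + a * (‖u‖ * ‖u‖) := by
        rw [← hux, inner_add_left, inner_smul_left]
        simp [Complex.mul_re, ← inner_self_eq_norm_mul_norm (𝕜 := ℂ)]
        try ring
      rw [this]
      have := hpos u
      linarith
    have h2 : (inner ℂ x u : ℂ).re ≤ ‖x‖ * ‖u‖ := by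
      calc (inner ℂ x u : ℂ).re ≤ ‖(inner ℂ x u : ℂ)‖ := Complex.re_le_norm _
        _ ≤ ‖x‖ * ‖u‖ := norm_inner_le_norm x u
    rcases eq_or_lt_of_le (norm_nonneg u) with h | h
    · rw [← h]; simp [norm_nonneg]
    · have : a * ‖u‖ * ‖u‖ ≤ ‖x‖ * ‖u‖ := by nlinarith
      exact le_of_mul_le_mul_right (by linarith) h
  -- a • B a (P y) = P y
  have hfix : ∀ a : ℝ, 0 < a → (a : ℂ) • B a (P y) = P y := by
    intro a ha
    have h1 : (T + (a : ℂ) • 1) (P y) = (a : ℂ) • P y := by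
      simp [ContinuousLinearMap.add_apply, (hP y).1]
    have := congrArg (fun S : H →L[ℂ] H => S (P y)) (hB a ha).1
    simp only [ContinuousLinearMap.comp_apply, ContinuousLinearMap.one_apply] at this
    rw [h1, map_smul] at this
    exact this
  set w := y - P y with hw
  -- w is in the closure of range T
  have hwcl : w ∈ closure ((LinearMap.range (T : H →ₗ[ℂ] H)) : Set H) := by
    have hmem : w ∈ (LinearMap.range (T : H →ₗ[ℂ] H))ᗮᗮ := by
      rw [Submodule.mem_orthogonal]
      intro v hv
      have hTv : T v = 0 := by
        have h1 : (inner ℂ (T (T v)) v : ℂ) = 0 := by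
          rw [Submodule.mem_orthogonal] at hv
          exact hv (T (T v)) ⟨T v, rfl⟩
        have h2 : (inner ℂ (T v) (T v) : ℂ) = 0 := (hT.isSymmetric (T v) v).symm.trans h1
        exact inner_self_eq_zero.mp h2
      exact (hP y).2 v hTv
    rw [Submodule.orthogonal_orthogonal_eq_closure] at hmem
    exact hmem
  -- a • B a w → 0
  have hmain : Tendsto (fun a : ℝ => (a : ℂ) • B a w) (𝓝[>] 0) (𝓝 0) := by
    rw [Metric.tendsto_nhdsWithin_nhds]
    intro ε hε
    obtain ⟨z, hz, hdz⟩ := Metric.mem_closure_iff.mp hwcl (ε / 2) (by linarith)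
    obtain ⟨v, hv⟩ := hz
    refine ⟨ε / (4 * ‖v‖ + 1), by positivity, fun a ha hda => ?_⟩
    have ha' : 0 < a := ha
    have hda' : a < ε / (4 * ‖v‖ + 1) := by
      rw [Real.dist_eq, sub_zero, abs_of_pos ha'] at hda; exact hda
    have hsplit : (a : ℂ) • B a w = (a : ℂ) • B a (w - z) + (a : ℂ) • B a z := by
      rw [← smul_add, ← map_add, sub_add_cancel]
    -- bound for the z part :  a • B a (T v) = a • v - a • (a • B a v)
    have hz2 : (a : ℂ) • B a z = (a : ℂ) • v - (a : ℂ) • ((a : ℂ) • B a v) := by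
      have h1 : z = (T + (a : ℂ) • 1) v - (a : ℂ) • v := by
        simp [ContinuousLinearMap.add_apply, ← hv]
      have h2 : B a ((T + (a : ℂ) • 1) v) = v := by
        have := congrArg (fun S : H →L[ℂ] H => S v) (hB a ha').1
        simpa [ContinuousLinearMap.comp_apply] using this
      rw [h1, map_sub, map_smul, h2, smul_sub]
    have hbz : ‖(a : ℂ) • B a z‖ ≤ 2 * (a * ‖v‖) := by
      rw [hz2]
      calc ‖(a : ℂ) • v - (a : ℂ) • ((a : ℂ) • B a v)‖
          ≤ ‖(a : ℂ) • v‖ + ‖(a : ℂ) • ((a : ℂ) • B a v)‖ := norm_sub_le _ _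
        _ = a * ‖v‖ + a * (a * ‖B a v‖) := by
            simp [norm_smul, abs_of_pos ha', Complex.norm_real, mul_assoc]
        _ ≤ a * ‖v‖ + a * ‖v‖ := by
            have := key a ha' v
            have : a * (a * ‖B a v‖) ≤ a * ‖v‖ :=
              mul_le_mul_of_nonneg_left (key a ha' v) ha'.le
            linarith
        _ = 2 * (a * ‖v‖) := by ring
    have hbwz : ‖(a : ℂ) • B a (w - z)‖ ≤ ‖w - z‖ := by
      have hna : ‖(a:ℂ)‖ = a := by simp [abs_of_pos ha']
      rw [norm_smul, hna]
      exact key a ha' (w - z)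
    have hdwz : ‖w - z‖ < ε / 2 := by rwa [dist_eq_norm] at hdz
    have hav : 2 * (a * ‖v‖) < ε / 2 := by
      have h1 : a * (4 * ‖v‖ + 1) < ε := by
        rw [lt_div_iff₀ (by positivity)] at hda'
        linarith
      nlinarith [norm_nonneg v, ha'.le]
    rw [dist_eq_norm, sub_zero, hsplit]
    calc ‖(a : ℂ) • B a (w - z) + (a : ℂ) • B a z‖
        ≤ ‖(a : ℂ) • B a (w - z)‖ + ‖(a : ℂ) • B a z‖ := norm_add_le _ _
      _ < ε / 2 + ε / 2 := by
          apply add_lt_add_of_le_of_lt (le_trans hbwz hdwz.le)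
          exact lt_of_le_of_lt hbz hav
      _ = ε := by ring
  -- first part
  have hfirst : Tendsto (fun a : ℝ => ‖(a : ℂ) • B a y - P y‖) (𝓝[>] 0) (𝓝 0) := by
    have heq : (fun a : ℝ => ‖(a : ℂ) • B a w‖) =ᶠ[𝓝[>] (0:ℝ)]
        (fun a : ℝ => ‖(a : ℂ) • B a y - P y‖) := by
      filter_upwards [self_mem_nhdsWithin] with a ha
      have ha' : (0:ℝ) < a := ha
      have h3 : (a : ℂ) • B a y - P y = (a : ℂ) • B a w := by
        rw [hw, map_sub, smul_sub, hfix a ha']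
      rw [h3]
    have h0 : Tendsto (fun a : ℝ => ‖(a : ℂ) • B a w‖) (𝓝[>] 0) (𝓝 0) := by
      simpa [Function.comp_def] using (continuous_norm.tendsto (0:H)).comp hmain
    exact Tendsto.congr' heq h0
  refine ⟨hfirst, fun hperp => ?_⟩
  -- P y = 0
  have hPy : P y = 0 := by
    have h1 : (inner ℂ (P y) (y - P y) : ℂ) = 0 := (hP y).2 (P y) (hP y).1
    have h2 : (inner ℂ (P y) y : ℂ) = 0 := hperp (P y) (hP y).1
    rw [inner_sub_right, h2, zero_sub, neg_eq_zero] at h1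
    exact inner_self_eq_zero.mp h1
  have heq : (fun a : ℝ => ‖(a : ℂ) • B a y - P y‖) =ᶠ[𝓝[>] (0:ℝ)]
      (fun a : ℝ => a * ‖B a y‖) := by
    filter_upwards [self_mem_nhdsWithin] with a ha
    have ha' : (0:ℝ) < a := ha
    have hna : ‖(a:ℂ)‖ = a := by simp [abs_of_pos ha']
    rw [hPy, sub_zero, norm_smul, hna]
  exact Tendsto.congr' heq hfirst
end

section
/- Let A be a bounded selfadjoint operator on a Hilbert space H, and y ∈ H orthogonal to N(A). Then lim_{a→0+} a‖(A + ia)^{-1} y‖ = 0, where i is the imaginary unit and a > 0. -/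
open ContinuousLinearMap Filter Topology

/-- For bounded selfadjoint `A` and `y ⊥ N(A)`, `a‖(A + ia)⁻¹ y‖ → 0` as `a → 0⁺`. -/
theorem tendsto_a_Aiainv_y
    {H : Type*} [NormedAddCommGroup H] [InnerProductSpace ℂ H] [CompleteSpace H]
    (A : H →L[ℂ] H) (hA : IsSelfAdjoint A)
    (y : H) (hy : ∀ u : H, A u = 0 → (inner ℂ u y : ℂ) = 0)
    (R : ℝ → H →L[ℂ] H)
    (hR : ∀ a : ℝ, 0 < a →
      R a ∘L (A + (Complex.I * a) • 1) = 1 ∧ (A + (Complex.I * a) • 1) ∘L R a = 1) :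
    Tendsto (fun a : ℝ => a * ‖R a y‖) (𝓝[>] 0) (𝓝 0) := by
  have hsymm : ∀ u v : H, (inner ℂ (A u) v : ℂ) = inner ℂ u (A v) := by
    intro u v
    conv_lhs => rw [← hA.adjoint_eq]
    exact ContinuousLinearMap.adjoint_inner_left A v u
  have hreal : ∀ u : H, (inner ℂ (A u) u : ℂ).im = 0 := by
    intro u
    have h2 : (starRingEnd ℂ) (inner ℂ (A u) u) = inner ℂ (A u) u := by
      rw [inner_conj_symm]; exact (hsymm u u).symm
    exact Complex.conj_eq_iff_im.mp h2
  -- lower bound on ‖(A + ia)u‖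
  have key : ∀ a : ℝ, 0 < a → ∀ u : H,
      a * ‖u‖ ≤ ‖(A + (Complex.I * a) • (1 : H →L[ℂ] H)) u‖ := by
    intro a ha u
    have happ : (A + (Complex.I * a) • (1 : H →L[ℂ] H)) u = A u + (Complex.I * a) • u := by
      simp
    have expand : ‖A u + (Complex.I * a) • u‖ ^ 2
        = ‖A u‖ ^ 2 + 2 * RCLike.re (inner ℂ (A u) ((Complex.I * a) • u) : ℂ)
          + ‖(Complex.I * a) • u‖ ^ 2 := norm_add_sq (𝕜 := ℂ) _ _
    have hre : RCLike.re (inner ℂ (A u) ((Complex.I * a) • u) : ℂ) = 0 := by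
      rw [inner_smul_right]
      have := hreal u
      simp [RCLike.re, Complex.mul_re, this]
    have hnsmul : ‖(Complex.I * a) • u‖ = a * ‖u‖ := by
      rw [norm_smul]
      simp [abs_of_pos ha]
    have hsq : (a * ‖u‖) ^ 2 ≤ ‖A u + (Complex.I * a) • u‖ ^ 2 := by
      rw [expand, hre, hnsmul]
      nlinarith [sq_nonneg ‖A u‖]
    rw [happ]
    have h1 : (0:ℝ) ≤ a * ‖u‖ := by positivity
    nlinarith [norm_nonneg (A u + (Complex.I * a) • u)]
  -- a ‖R a v‖ ≤ ‖v‖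
  have bound1 : ∀ a : ℝ, 0 < a → ∀ v : H, a * ‖R a v‖ ≤ ‖v‖ := by
    intro a ha v
    have h := ContinuousLinearMap.ext_iff.mp (hR a ha).2 v
    simp only [ContinuousLinearMap.comp_apply, ContinuousLinearMap.one_apply] at h
    calc a * ‖R a v‖ ≤ ‖(A + (Complex.I * a) • (1 : H →L[ℂ] H)) (R a v)‖ := key a ha _
      _ = ‖v‖ := by rw [h]
  -- a ‖R a (A z)‖ ≤ 2 a ‖z‖
  have bound2 : ∀ a : ℝ, 0 < a → ∀ z : H, a * ‖R a (A z)‖ ≤ 2 * (a * ‖z‖) := by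
    intro a ha z
    have h := ContinuousLinearMap.ext_iff.mp (hR a ha).1 z
    simp only [ContinuousLinearMap.comp_apply, ContinuousLinearMap.one_apply,
      ContinuousLinearMap.add_apply, ContinuousLinearMap.smul_apply,
      ContinuousLinearMap.one_apply, map_add, map_smul] at h
    -- h : R a (A z) + (I*a) • R a z = z
    have hz : R a (A z) = z - (Complex.I * a) • R a z := eq_sub_of_add_eq h
    have hn : ‖R a (A z)‖ ≤ ‖z‖ + a * ‖R a z‖ := by
      rw [hz]
      calc ‖z - (Complex.I * a) • R a z‖ ≤ ‖z‖ + ‖(Complex.I * a) • R a z‖ := norm_sub_le _ _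
        _ = ‖z‖ + a * ‖R a z‖ := by
            rw [norm_smul]; simp [abs_of_pos ha]
    have hb := bound1 a ha z
    nlinarith [norm_nonneg (R a z)]
  -- density : y in closure of range A
  have hclos : y ∈ closure ((LinearMap.range (A : H →ₗ[ℂ] H) : Submodule ℂ H) : Set H) := by
    have horth : (LinearMap.range (A : H →ₗ[ℂ] H))ᗮ = LinearMap.ker (A : H →ₗ[ℂ] H) := by
      ext v
      simp only [Submodule.mem_orthogonal, LinearMap.mem_range, LinearMap.mem_ker,
        forall_exists_index]
      constructor
      · intro hv
        have := hv (A (A v)) (A v) rfl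
        rw [hsymm] at this
        exact inner_self_eq_zero.mp this
      · intro hv u x hx
        subst hx
        have : (inner ℂ ((A : H →ₗ[ℂ] H) x) v : ℂ) = inner ℂ (A x) v := rfl
        rw [this, hsymm]
        have hv' : A v = 0 := hv
        simp [hv']
    have hy' : y ∈ (LinearMap.ker (A : H →ₗ[ℂ] H))ᗮ := by
      rw [Submodule.mem_orthogonal]
      intro u hu
      exact hy u hu
    rw [← horth] at hy'
    rw [Submodule.orthogonal_orthogonal_eq_closure] at hy'
    exact hy'
  -- final limit
  rw [Metric.tendsto_nhdsWithin_nhds]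
  intro ε hε
  obtain ⟨w, hw, hwd⟩ := Metric.mem_closure_iff.mp hclos (ε / 2) (by linarith)
  obtain ⟨z, hz⟩ := LinearMap.mem_range.mp hw
  refine ⟨ε / (4 * ‖z‖ + 1), by positivity, fun a ha hd => ?_⟩
  have ha' : 0 < a := ha
  have hda : a < ε / (4 * ‖z‖ + 1) := by
    rw [Real.dist_eq, sub_zero, abs_of_pos ha'] at hd
    exact hd
  have hsplit : ‖R a y‖ ≤ ‖R a (y - A z)‖ + ‖R a (A z)‖ := by
    calc ‖R a y‖ = ‖R a (y - A z) + R a (A z)‖ := by rw [← map_add, sub_add_cancel]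
      _ ≤ ‖R a (y - A z)‖ + ‖R a (A z)‖ := norm_add_le _ _
  have h1 := bound1 a ha' (y - A z)
  have h2 := bound2 a ha' z
  have hyd : ‖y - A z‖ < ε / 2 := by
    rw [dist_eq_norm] at hwd
    rw [← hz] at hwd
    exact hwd
  have hmain : a * ‖R a y‖ < ε := by
    have : a * ‖R a y‖ ≤ a * ‖R a (y - A z)‖ + a * ‖R a (A z)‖ := by nlinarith [hsplit]
    have h2a : 2 * (a * ‖z‖) < ε / 2 := by
      have hlt : a * (4 * ‖z‖ + 1) < ε := (lt_div_iff₀ (by positivity)).mp hda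
      nlinarith [norm_nonneg z, ha']
    linarith
  rw [Real.dist_eq]
  rw [sub_zero, abs_of_nonneg (by positivity)]
  exact hmain
end

section
/- Let A be a bounded selfadjoint operator on a Hilbert space H, f = Ay with y ⊥ N(A). For a > 0, let u_a(t) = [i(A+ia)]^{-1}(e^{i(A+ia)t} − I)(−if) be the solution of u̇ = i(A+ia)u − if, u(0) = 0. Then lim_{a→0+} lim_{t→∞} u_a(t) = y (iterated limit in norm). -/
open ContinuousLinearMap Filter Topology

theorem aux_resolvent_bound {H : Type*} [NormedAddCommGroup H] [InnerProductSpace ℂ H]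
    [CompleteSpace H]
    (A : H →L[ℂ] H) (hA : IsSelfAdjoint A) {a : ℝ} (ha : 0 < a) (w : H) :
    a * ‖w‖ ≤ ‖(A + (Complex.I * a) • (1 : H →L[ℂ] H)) w‖ := by
  have hreal : (inner ℂ (A w) w : ℂ).im = 0 := by
    have h1 : (starRingEnd ℂ) (inner ℂ (A w) w) = inner ℂ w (A w) := inner_conj_symm _ _
    have h2 : (inner ℂ (A w) w : ℂ) = inner ℂ w (A w) := by
      have := hA.isSymmetric w w
      simpa using this
    have h3 : (starRingEnd ℂ) (inner ℂ (A w) w : ℂ) = inner ℂ (A w) w := by rw [h1, ← h2]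
    have h4 := congrArg Complex.im h3
    simp only [Complex.conj_im] at h4
    linarith
  have expand : ‖(A + (Complex.I * a) • (1 : H →L[ℂ] H)) w‖ ^ 2
      = ‖A w‖ ^ 2 + (a * ‖w‖) ^ 2 := by
    have h0 : (A + (Complex.I * a) • (1 : H →L[ℂ] H)) w = A w + (Complex.I * a) • w := by
      simp
    rw [h0, @norm_add_sq ℂ]
    have hre : RCLike.re (inner ℂ (A w) ((Complex.I * (a:ℂ)) • w) : ℂ) = 0 := by
      rw [inner_smul_right, RCLike.re_to_complex]
      simp [Complex.mul_re, Complex.mul_im, hreal]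
    rw [hre]
    have : ‖(Complex.I * (a:ℂ)) • w‖ = a * ‖w‖ := by
      rw [norm_smul]
      simp [abs_of_pos ha]
    rw [this]; ring
  nlinarith [norm_nonneg ((A + (Complex.I * a) • (1:H→L[ℂ]H)) w), norm_nonneg w,
    norm_nonneg (A w), mul_nonneg ha.le (norm_nonneg w)]

theorem aux_exp_norm {H : Type*} [NormedAddCommGroup H] [InnerProductSpace ℂ H] [CompleteSpace H]
    (A : H →L[ℂ] H) (hA : IsSelfAdjoint A) (a t : ℝ) (x : H) :
    ‖NormedSpace.exp ((t : ℂ) • (Complex.I • (A + (Complex.I * a) • (1 : H →L[ℂ] H)))) x‖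
      ≤ Real.exp (-(t*a)) * ‖x‖ := by
  have e1 : Complex.I • (A + (Complex.I * a) • (1:H→L[ℂ]H))
      = Complex.I • A + (Complex.I * (Complex.I * a)) • (1:H→L[ℂ]H) := by
    rw [smul_add, smul_smul]
  have hsplit : (t : ℂ) • (Complex.I • (A + (Complex.I * a) • (1 : H →L[ℂ] H)))
      = ((-(t*a) : ℝ) : ℂ) • (1 : H →L[ℂ] H) + (((t:ℂ) * Complex.I)) • A := by
    rw [e1, smul_add, smul_smul, smul_smul, add_comm]
    congr 1
    · congr 1
      rw [show Complex.I * (Complex.I * (a:ℂ)) = -(a:ℂ) by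
        rw [← mul_assoc, Complex.I_mul_I]; ring]
      push_cast; ring
  rw [hsplit]
  have hcomm : Commute (((-(t*a) : ℝ) : ℂ) • (1 : H →L[ℂ] H)) ((((t:ℂ) * Complex.I)) • A) :=
    (Commute.one_left _).smul_left _
  let +nondep : NormedAlgebra ℚ (H →L[ℂ] H) := .restrictScalars ℚ ℂ (H →L[ℂ] H)
  rw [NormedSpace.exp_add_of_commute hcomm]
  have h1 : NormedSpace.exp (((-(t*a) : ℝ) : ℂ) • (1 : H →L[ℂ] H))
      = Complex.exp ((-(t*a) : ℝ) : ℂ) • (1 : H →L[ℂ] H) := by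
    rw [← Algebra.algebraMap_eq_smul_one, ← NormedSpace.algebraMap_exp_comm,
      Algebra.algebraMap_eq_smul_one, Complex.exp_eq_exp_ℂ]
  rw [h1, smul_mul_assoc, one_mul]
  have hskew : (((t:ℂ) * Complex.I)) • A ∈ skewAdjoint (H →L[ℂ] H) := by
    rw [skewAdjoint.mem_iff, star_smul, hA.star_eq, ← neg_smul]
    congr 1
    simp [Complex.ext_iff]
  have hU : NormedSpace.exp ((((t:ℂ) * Complex.I)) • A) ∈ unitary (H →L[ℂ] H) :=
    NormedSpace.exp_mem_unitary_of_mem_skewAdjoint hskew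
  have hUle : ‖NormedSpace.exp ((((t:ℂ) * Complex.I)) • A) x‖ ≤ ‖x‖ := by
    set U := NormedSpace.exp ((((t:ℂ) * Complex.I)) • A) with hUdef
    have h2 : star U * U = 1 := hU.1
    have hfix : adjoint U (U x) = x := by
      have := congrArg (fun T : H →L[ℂ] H => T x) h2
      simpa [ContinuousLinearMap.star_eq_adjoint] using this
    have h3 : (inner ℂ (U x) (U x) : ℂ) = inner ℂ x x := by
      rw [← ContinuousLinearMap.adjoint_inner_right, hfix]
    rw [inner_self_eq_norm_sq_to_K, inner_self_eq_norm_sq_to_K] at h3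
    have h4 : ‖U x‖^2 = ‖x‖^2 := by exact_mod_cast h3
    nlinarith [norm_nonneg (U x), norm_nonneg x]
  calc ‖(Complex.exp ((-(t*a) : ℝ) : ℂ) • NormedSpace.exp ((((t:ℂ) * Complex.I)) • A)) x‖
      = ‖Complex.exp ((-(t*a) : ℝ) : ℂ)‖ * ‖NormedSpace.exp ((((t:ℂ) * Complex.I)) • A) x‖ := by
        rw [ContinuousLinearMap.smul_apply, norm_smul]
    _ ≤ Real.exp (-(t*a)) * ‖x‖ := by
        rw [Complex.norm_exp]
        simp only [Complex.ofReal_re]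
        exact mul_le_mul_of_nonneg_left hUle (Real.exp_nonneg _)

/-- DSM for a selfadjoint operator: with `f = Ay`, `y ⊥ N(A)`, and
`u_a(t) = [i(A+ia)]⁻¹ (e^{i(A+ia)t} − I)(−if)` (the solution of
`u̇ = i(A+ia)u − if, u(0)=0`), the iterated limit `lim_{a→0⁺} lim_{t→∞} u_a(t)` equals `y`. -/
theorem dsm_iterated_limit
    {H : Type*} [NormedAddCommGroup H] [InnerProductSpace ℂ H] [CompleteSpace H]
    (A : H →L[ℂ] H) (hA : IsSelfAdjoint A)
    (y f : H) (hf : f = A y)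
    (hy : ∀ v : H, A v = 0 → (inner ℂ v y : ℂ) = 0)
    (R : ℝ → H →L[ℂ] H)
    (hR : ∀ a : ℝ, 0 < a →
      R a ∘L (A + (Complex.I * a) • 1) = 1 ∧ (A + (Complex.I * a) • 1) ∘L R a = 1)
    (u : ℝ → ℝ → H)
    (hu : ∀ a t : ℝ, u a t =
      (-Complex.I) • (R a
        ((NormedSpace.exp ((t : ℂ) • (Complex.I • (A + (Complex.I * a) • 1))) - 1)
          ((-Complex.I) • f)))) :
    ∃ L : ℝ → H,
      (∀ a : ℝ, 0 < a → Tendsto (fun t : ℝ => u a t) atTop (𝓝 (L a))) ∧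
      Tendsto L (𝓝[>] 0) (𝓝 y) := by
  -- basic resolvent bound: ‖R a x‖ ≤ ‖x‖ / a
  have hb : ∀ a : ℝ, 0 < a → ∀ x : H, a * ‖R a x‖ ≤ ‖x‖ := by
    intro a ha x
    have h2 := (hR a ha).2
    have hkey := aux_resolvent_bound A hA ha (R a x)
    have hx : (A + (Complex.I * a) • (1 : H →L[ℂ] H)) (R a x) = x := by
      rw [← ContinuousLinearMap.comp_apply, h2, ContinuousLinearMap.one_apply]
    rwa [hx] at hkey
  -- key identity
  have hid : ∀ a : ℝ, 0 < a → ∀ w : H, R a (A w) = w - (Complex.I * a) • R a w := by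
    intro a ha w
    have h1 := (hR a ha).1
    have h2 : R a ((A + (Complex.I * a) • (1 : H →L[ℂ] H)) w) = w := by
      rw [← ContinuousLinearMap.comp_apply, h1, ContinuousLinearMap.one_apply]
    have h4 : (A + (Complex.I * a) • (1 : H →L[ℂ] H)) w = A w + (Complex.I * a) • w := by
      simp
    rw [h4, map_add, map_smul] at h2
    exact eq_sub_of_add_eq h2
  have hnorm : ∀ a : ℝ, 0 < a → ‖Complex.I * (a:ℂ)‖ = a := by
    intro a ha
    simp [norm_mul, Complex.norm_I, Complex.norm_real, abs_of_pos ha]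
  refine ⟨fun a => R a f, ?_, ?_⟩
  · -- limit in t
    intro a ha
    have hrepr : ∀ t : ℝ, u a t = R a f
        - R a (NormedSpace.exp ((t : ℂ) • (Complex.I • (A + (Complex.I * a) • 1))) f) := by
      intro t
      rw [hu]
      set E := NormedSpace.exp ((t : ℂ) • (Complex.I • (A + (Complex.I * a) • 1))) with hE
      have e1 : (E - 1) ((-Complex.I) • f) = (-Complex.I) • (E f - f) := by
        simp [smul_sub]
      rw [e1, map_smul, smul_smul]
      have e2 : (-Complex.I) * (-Complex.I) = (-1 : ℂ) := by
        rw [neg_mul_neg, Complex.I_mul_I]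
      rw [e2, neg_one_smul, map_sub]
      abel
    have hten : Tendsto (fun t : ℝ =>
        R a (NormedSpace.exp ((t : ℂ) • (Complex.I • (A + (Complex.I * a) • 1))) f))
        atTop (𝓝 0) := by
      have hbound : ∀ t : ℝ,
          ‖R a (NormedSpace.exp ((t : ℂ) • (Complex.I • (A + (Complex.I * a) • 1))) f)‖
            ≤ ‖R a‖ * (Real.exp (-(t*a)) * ‖f‖) := by
        intro t
        calc ‖R a (NormedSpace.exp ((t : ℂ) • (Complex.I • (A + (Complex.I * a) • 1))) f)‖
            ≤ ‖R a‖ * ‖NormedSpace.exp ((t : ℂ) • (Complex.I • (A + (Complex.I * a) • 1))) f‖ :=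
              le_opNorm _ _
          _ ≤ ‖R a‖ * (Real.exp (-(t*a)) * ‖f‖) :=
              mul_le_mul_of_nonneg_left (aux_exp_norm A hA a t f) (norm_nonneg _)
      have hg : Tendsto (fun t : ℝ => ‖R a‖ * (Real.exp (-(t*a)) * ‖f‖)) atTop (𝓝 0) := by
        have h1 : Tendsto (fun t : ℝ => -(t*a)) atTop atBot := by
          have := tendsto_id.atTop_mul_const ha (f := fun t : ℝ => t) (l := atTop)
          exact tendsto_neg_atTop_atBot.comp this
        have h2 : Tendsto (fun t : ℝ => Real.exp (-(t*a))) atTop (𝓝 0) :=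
          Real.tendsto_exp_atBot.comp h1
        have h3 := (h2.mul_const ‖f‖).const_mul ‖R a‖
        simpa using h3
      exact squeeze_zero_norm hbound hg
    have hT : Tendsto (fun t : ℝ => R a f
        - R a (NormedSpace.exp ((t : ℂ) • (Complex.I • (A + (Complex.I * a) • 1))) f))
        atTop (𝓝 (R a f - 0)) := tendsto_const_nhds.sub hten
    rw [sub_zero] at hT
    exact hT.congr fun t => (hrepr t).symm
  · -- limit in a
    -- y is in the closure of the range of A
    set K : Submodule ℂ H := LinearMap.range (A : H →ₗ[ℂ] H) with hK
    have hyK : y ∈ closure (K : Set H) := by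
      have hmem : y ∈ Kᗮᗮ := by
        rw [Submodule.mem_orthogonal]
        intro v hv
        have hAv : A v = 0 := by
          have h1 : ∀ x : H, (inner ℂ x (A v) : ℂ) = 0 := by
            intro x
            have h2 : (inner ℂ x (A v) : ℂ) = inner ℂ (A x) v := by
              conv_lhs => rw [← hA.adjoint_eq]
              exact ContinuousLinearMap.adjoint_inner_right A x v
            rw [h2]
            exact (Submodule.mem_orthogonal K v).1 hv (A x) ⟨x, rfl⟩
          have := h1 (A v)
          rwa [inner_self_eq_zero] at this
        exact hy v hAv
      rw [Submodule.orthogonal_orthogonal_eq_closure] at hmem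
      exact hmem
    rw [Metric.tendsto_nhdsWithin_nhds]
    intro ε hε
    obtain ⟨b, hbK, hby⟩ := Metric.mem_closure_iff.1 hyK (ε/4) (by linarith)
    obtain ⟨z, hz⟩ := hbK
    have hyz : ‖y - A z‖ < ε/4 := by
      rw [← hz, dist_eq_norm] at hby
      simpa using hby
    refine ⟨min 1 (ε/(4*(‖z‖+1))), lt_min one_pos (by positivity), ?_⟩
    intro a haS had
    have ha : 0 < a := haS
    have had' : a < ε/(4*(‖z‖+1)) := by
      rw [Real.dist_eq, sub_zero, abs_of_pos ha] at had
      exact lt_of_lt_of_le had (min_le_right _ _)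
    -- dist (R a f) y = a * ‖R a y‖
    have hdist : dist (R a f) y = a * ‖R a y‖ := by
      rw [dist_eq_norm, hf, hid a ha y]
      rw [sub_sub_cancel_left, norm_neg, norm_smul, hnorm a ha]
    rw [hdist]
    -- estimate a * ‖R a y‖
    have k1 : a * ‖R a (y - A z)‖ ≤ ‖y - A z‖ := hb a ha _
    have k2 : a * ‖R a z‖ ≤ ‖z‖ := hb a ha z
    have k3 : R a y = R a (y - A z) + R a (A z) := by
      rw [← map_add]; congr 1; abel
    have k4 : ‖R a (A z)‖ ≤ ‖z‖ + a * ‖R a z‖ := by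
      rw [hid a ha z]
      calc ‖z - (Complex.I * a) • R a z‖ ≤ ‖z‖ + ‖(Complex.I * a) • R a z‖ := norm_sub_le _ _
        _ = ‖z‖ + a * ‖R a z‖ := by rw [norm_smul, hnorm a ha]
    have k5 : ‖R a y‖ ≤ ‖R a (y - A z)‖ + ‖R a (A z)‖ := by
      rw [k3]; exact norm_add_le _ _
    have k6 : a * ‖R a y‖ ≤ ‖y - A z‖ + a * ‖z‖ + a * (a * ‖R a z‖) := by
      have := mul_le_mul_of_nonneg_left k5 ha.le
      have h7 := mul_le_mul_of_nonneg_left k4 ha.le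
      nlinarith
    have k7 : a * (a * ‖R a z‖) ≤ a * ‖z‖ := mul_le_mul_of_nonneg_left k2 ha.le
    have k8 : a * ‖z‖ < ε/4 := by
      have hz1 : ‖z‖ < ‖z‖ + 1 := by linarith
      have : a * ‖z‖ < (ε/(4*(‖z‖+1))) * (‖z‖+1) := by
        apply mul_lt_mul' had'.le hz1 (norm_nonneg z)
        positivity
      have he : (ε/(4*(‖z‖+1))) * (‖z‖+1) = ε/4 := by
        field_simp
      linarith [this, he ▸ this]
    linarith
end

section
/- Let a : [0,∞) → (0,∞) be continuously differentiable, decreasing to 0, with a' + a² ∈ L¹(0,∞) and ∫_0^∞ a(s) ds = ∞. Then for every real λ ≠ 0, lim_{t→∞} ∫_0^t e^{iλ(t−s)} a(s) exp(−∫_s^t a(p) dp) ds = 0. -/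
open Filter Topology MeasureTheory

/-- For `a` positive `C¹`, decreasing to `0`, with `a' + a² ∈ L¹(0,∞)` and `∫_0^∞ a = ∞`,
and any real `λ ≠ 0`, the oscillatory integral
`∫_0^t e^{iλ(t−s)} a(s) exp(−∫_s^t a(p)dp) ds` tends to `0` as `t → ∞`. -/
theorem oscillatory_integral_tendsto_zero
    (a a' : ℝ → ℝ)
    (hderiv : ∀ t : ℝ, 0 ≤ t → HasDerivAt a (a' t) t)
    (hcont : ContinuousOn a' (Set.Ici 0))
    (hpos : ∀ t : ℝ, 0 ≤ t → 0 < a t)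
    (hmono : AntitoneOn a (Set.Ici 0))
    (hlim : Tendsto a atTop (𝓝 0))
    (hL1 : IntegrableOn (fun t => a' t + (a t) ^ 2) (Set.Ioi 0))
    (hdiv : ¬ IntegrableOn a (Set.Ioi 0))
    (lam : ℝ) (hlam : lam ≠ 0) :
    Tendsto (fun t : ℝ =>
        ∫ s in Set.Ioc (0 : ℝ) t,
          Complex.exp (Complex.I * lam * ((t : ℂ) - (s : ℂ))) * (a s : ℂ) *
            (Real.exp (-∫ p in Set.Ioc s t, a p) : ℂ))
      atTop (𝓝 0) := by
  have hacont : ContinuousOn a (Set.Ici 0) :=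
    fun t ht => ((hderiv t ht).continuousAt).continuousWithinAt
  -- interval integrability of a on subintervals of [0,∞)
  have haII : ∀ {u v : ℝ}, 0 ≤ u → 0 ≤ v → IntervalIntegrable a MeasureTheory.volume u v := by
    intro u v hu hv
    apply (hacont.mono ?_).intervalIntegrable
    intro x hx
    exact le_trans (le_min hu hv) hx.1
  set A : ℝ → ℝ := fun t => ∫ s in (0:ℝ)..t, a s with hAdef
  have hAsub : ∀ {s t : ℝ}, 0 ≤ s → 0 ≤ t → A t - A s = ∫ p in s..t, a p := by
    intro s t hs ht
    exact intervalIntegral.integral_interval_sub_left (haII le_rfl ht) (haII le_rfl hs)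
  have hIocA : ∀ {s t : ℝ}, 0 ≤ s → s ≤ t → (∫ p in Set.Ioc s t, a p) = A t - A s := by
    intro s t hs hst
    rw [← intervalIntegral.integral_of_le hst, hAsub hs (hs.trans hst)]
  have hAmono : ∀ {s t : ℝ}, 0 ≤ s → s ≤ t → A s ≤ A t := by
    intro s t hs hst
    have h1 : A t - A s = ∫ p in s..t, a p := hAsub hs (hs.trans hst)
    have h2 : 0 ≤ ∫ p in s..t, a p :=
      intervalIntegral.integral_nonneg hst (fun u hu => (hpos u (hs.trans hu.1)).le)
    linarith
  have hA0 : A 0 = 0 := intervalIntegral.integral_same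
  have hAderiv : ∀ {s : ℝ}, 0 < s → HasDerivAt A (a s) s := by
    intro s hs
    exact intervalIntegral.integral_hasDerivAt_right (haII le_rfl hs.le)
      (ContinuousOn.stronglyMeasurableAtFilter isOpen_Ioi
        (hacont.mono (fun x hx => le_of_lt hx)) s hs)
      ((hderiv s hs.le).continuousAt)
  have hAcontOn : ∀ T : ℝ, ContinuousOn A (Set.Icc 0 T) := by
    intro T
    rcases le_or_gt 0 T with hT | hT
    · have h1 : IntegrableOn a (Set.uIcc 0 T) := by
        rw [Set.uIcc_of_le hT]
        exact ((hacont.mono (fun x hx => hx.1)).integrableOn_Icc)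
      have := intervalIntegral.continuousOn_primitive_interval h1
      rwa [Set.uIcc_of_le hT] at this
    · rw [Set.Icc_eq_empty (not_le.mpr hT)]
      exact continuousOn_empty _
  -- A tends to infinity
  have hAtop : Tendsto A atTop atTop := by
    have hmonoA : Monotone (fun t => A (max t 0)) := by
      intro u v huv
      exact hAmono (le_max_right _ _) (max_le_max huv le_rfl)
    rcases tendsto_of_monotone hmonoA with hc | ⟨l, hl⟩
    · refine hc.congr' ?_
      filter_upwards [eventually_ge_atTop (0:ℝ)] with t ht
      rw [max_eq_left ht]
    · exfalso
      apply hdiv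
      have hfi : ∀ t : ℝ, IntegrableOn a (Set.Ioc 0 t) := by
        intro t
        rcases le_or_gt 0 t with ht | ht
        · exact ((hacont.mono (fun x hx => hx.1)).integrableOn_Icc).mono_set
            Set.Ioc_subset_Icc_self
        · rw [Set.Ioc_eq_empty (by exact fun h => absurd (h.trans ht) (lt_irrefl 0))]
          exact integrableOn_empty
      refine MeasureTheory.integrableOn_Ioi_of_intervalIntegral_norm_tendsto l 0 hfi tendsto_id ?_
      refine hl.congr' ?_
      filter_upwards [eventually_ge_atTop (0:ℝ)] with t ht
      rw [max_eq_left ht]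
      simp only [hAdef, id]
      apply intervalIntegral.integral_congr
      intro x hx
      rw [Set.uIcc_of_le ht] at hx
      simp [Real.norm_eq_abs, abs_of_nonneg (hpos x hx.1).le]
  -- complex setup
  have hil_ne : (Complex.I * (lam:ℂ)) ≠ 0 :=
    mul_ne_zero Complex.I_ne_zero (by exact_mod_cast hlam)
  set il : ℂ := Complex.I * (lam:ℂ) with hildef
  have hne : ∀ s : ℝ, ((a s : ℂ) - il) ≠ 0 := by
    intro s h
    have him := congrArg Complex.im h
    simp [hildef] at him
    exact hlam him
  have hnorm_ge : ∀ s : ℝ, |lam| ≤ ‖(a s : ℂ) - il‖ := by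
    intro s
    have := Complex.abs_im_le_norm ((a s : ℂ) - il)
    simpa [hildef] using this
  set B : ℝ → ℂ := fun s => Complex.exp ((A s : ℂ) - il * s) with hBdef
  set φ : ℝ → ℂ := fun s => (a s : ℂ) / ((a s : ℂ) - il) with hφdef
  set ψ : ℝ → ℂ := fun s => (a' s : ℂ) / ((a s : ℂ) - il) ^ 2 with hψdef
  set G : ℝ → ℂ := fun s => φ s * B s with hGdef
  set C : ℝ → ℂ := fun t => Complex.exp (il * t - (A t : ℂ)) with hCdef
  set J : ℝ → ℂ := fun t => ∫ s in (0:ℝ)..t, ψ s * B s with hJdef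
  -- derivative of B
  have hBderiv : ∀ {s : ℝ}, 0 < s → HasDerivAt B (((a s : ℂ) - il) * B s) s := by
    intro s hs
    have h1 : HasDerivAt (fun x : ℝ => ((A x : ℝ) : ℂ)) ((a s : ℂ)) s :=
      (hAderiv hs).ofReal_comp
    have h2 : HasDerivAt (fun x : ℝ => il * (x:ℂ)) il s := by
      simpa using ((hasDerivAt_id s).ofReal_comp).const_mul il
    have h3 := (h1.sub h2).cexp
    simpa [hBdef, mul_comm] using h3
  have hφderiv : ∀ {s : ℝ}, 0 < s →
      HasDerivAt φ (-il * (a' s : ℂ) / ((a s : ℂ) - il) ^ 2) s := by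
    intro s hs
    have hn : HasDerivAt (fun x : ℝ => ((a x : ℝ) : ℂ)) ((a' s : ℂ)) s :=
      (hderiv s hs.le).ofReal_comp
    have hd : HasDerivAt (fun x : ℝ => ((a x : ℂ) - il)) ((a' s : ℂ)) s := hn.sub_const il
    have h := hn.div hd (hne s)
    refine h.congr_deriv ?_
    field_simp [hne s]
    ring
  have hGderiv : ∀ {s : ℝ}, 0 < s →
      HasDerivAt G ((a s : ℂ) * B s - il * (ψ s * B s)) s := by
    intro s hs
    have h := (hφderiv hs).mul (hBderiv hs)
    refine h.congr_deriv ?_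
    simp only [hφdef, hψdef]
    field_simp [hne s]
    ring
  -- continuity facts
  have hacontC : ContinuousOn (fun s : ℝ => ((a s : ℝ) : ℂ)) (Set.Ici 0) :=
    Complex.continuous_ofReal.comp_continuousOn hacont
  have hdenC : ContinuousOn (fun s : ℝ => ((a s : ℂ) - il)) (Set.Ici 0) :=
    hacontC.sub continuousOn_const
  have hφcont : ContinuousOn φ (Set.Ici 0) :=
    hacontC.div hdenC (fun s _ => hne s)
  have hψcont : ContinuousOn ψ (Set.Ici 0) :=
    (Complex.continuous_ofReal.comp_continuousOn hcont).div (hdenC.pow 2)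
      (fun s _ => pow_ne_zero 2 (hne s))
  have hBcont : ∀ T : ℝ, ContinuousOn B (Set.Icc 0 T) := by
    intro T
    apply Complex.continuous_exp.comp_continuousOn
    exact (Complex.continuous_ofReal.comp_continuousOn (hAcontOn T)).sub
      ((continuous_const.mul Complex.continuous_ofReal).continuousOn)
  have hIccIci : ∀ {T : ℝ}, Set.Icc (0:ℝ) T ⊆ Set.Ici 0 := fun {T} x hx => hx.1
  -- the fundamental integration by parts identity
  have key : ∀ {t : ℝ}, 0 ≤ t →
      (∫ s in (0:ℝ)..t, (a s : ℂ) * B s) = G t - G 0 + il * J t := by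
    intro t ht
    have hGcont : ContinuousOn G (Set.Icc 0 t) :=
      (hφcont.mono hIccIci).mul (hBcont t)
    have hint1 : IntervalIntegrable (fun s => (a s : ℂ) * B s) MeasureTheory.volume 0 t := by
      apply ContinuousOn.intervalIntegrable
      rw [Set.uIcc_of_le ht]
      exact (hacontC.mono hIccIci).mul (hBcont t)
    have hint2 : IntervalIntegrable (fun s => ψ s * B s) MeasureTheory.volume 0 t := by
      apply ContinuousOn.intervalIntegrable
      rw [Set.uIcc_of_le ht]
      exact (hψcont.mono hIccIci).mul (hBcont t)
    have hftc := intervalIntegral.integral_eq_sub_of_hasDeriv_right_of_le ht hGcont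
      (fun s hs => (hGderiv hs.1).hasDerivWithinAt)
      (hint1.sub (hint2.const_mul il))
    rw [intervalIntegral.integral_sub hint1 (hint2.const_mul il),
      intervalIntegral.integral_const_mul] at hftc
    simp only [hJdef]
    linear_combination hftc
  -- nonpositivity of a'
  have ha'nonpos : ∀ s : ℝ, 0 ≤ s → a' s ≤ 0 := by
    intro s hs
    have hslope : Tendsto (slope a s) (𝓝[>] s) (𝓝 (a' s)) :=
      (hasDerivAt_iff_tendsto_slope.mp (hderiv s hs)).mono_left
        (nhdsWithin_mono s (fun y hy => Set.mem_compl_singleton_iff.mpr (LT.lt.ne' hy)))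
    refine le_of_tendsto hslope ?_
    filter_upwards [self_mem_nhdsWithin] with y hy
    rw [slope_def_field]
    apply div_nonpos_of_nonpos_of_nonneg
    · have : a y ≤ a s := hmono hs (hs.trans hy.le) hy.le
      linarith
    · have hy' : s < y := hy
      linarith
  -- helper: integrability on Ioc from continuity on [0,∞)
  have hIntIoc : ∀ (f : ℝ → ℝ), (∀ v : ℝ, ContinuousOn f (Set.Icc 0 v)) →
      ∀ u v : ℝ, 0 ≤ u → IntegrableOn f (Set.Ioc u v) := by
    intro f hf u v hu
    rcases le_or_gt u v with huv | huv
    · have hsub : Set.Icc u v ⊆ Set.Icc 0 v := Set.Icc_subset_Icc hu le_rfl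
      exact (((hf v).mono hsub).integrableOn_Icc).mono_set Set.Ioc_subset_Icc_self
    · rw [Set.Ioc_eq_empty (not_lt.mpr huv.le)]
      exact integrableOn_empty
  -- continuity of various real functions
  have hexpAcont : ∀ v : ℝ, ContinuousOn (fun s => Real.exp (A s)) (Set.Icc 0 v) :=
    fun v => Real.continuous_exp.comp_continuousOn (hAcontOn v)
  have hWcont : ∀ v : ℝ, ContinuousOn (fun s => |a' s| * Real.exp (A s)) (Set.Icc 0 v) :=
    fun v => (continuous_abs.comp_continuousOn (hcont.mono hIccIci)).mul (hexpAcont v)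
  have haEcont : ∀ v : ℝ, ContinuousOn (fun s => a s * Real.exp (A s)) (Set.Icc 0 v) :=
    fun v => (hacont.mono hIccIci).mul (hexpAcont v)
  set g : ℝ → ℝ := fun s => a' s + (a s) ^ 2 with hgdef
  have hgcont : ContinuousOn g (Set.Ici 0) := hcont.add (hacont.pow 2)
  have hgacont : ∀ v : ℝ, ContinuousOn (fun s => |g s|) (Set.Icc 0 v) :=
    fun v => continuous_abs.comp_continuousOn (hgcont.mono hIccIci)
  set W : ℝ → ℝ := fun s => |a' s| * Real.exp (A s) with hWdef
  have hWint : ∀ u v : ℝ, 0 ≤ u → IntegrableOn W (Set.Ioc u v) := hIntIoc W hWcont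
  have hgint : ∀ u v : ℝ, 0 ≤ u → IntegrableOn (fun s => |g s|) (Set.Ioc u v) :=
    hIntIoc _ hgacont
  have haEint : ∀ u v : ℝ, 0 ≤ u → IntegrableOn (fun s => a s * Real.exp (A s)) (Set.Ioc u v) :=
    hIntIoc _ haEcont
  -- FTC for exp(A)
  have hgeA : ∀ {T t : ℝ}, 0 ≤ T → T ≤ t →
      (∫ s in Set.Ioc T t, a s * Real.exp (A s)) = Real.exp (A t) - Real.exp (A T) := by
    intro T t hT hTt
    rw [← intervalIntegral.integral_of_le hTt]
    apply intervalIntegral.integral_eq_sub_of_hasDeriv_right_of_le hTt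
      ((hexpAcont t).mono (Set.Icc_subset_Icc hT le_rfl))
    · intro s hs
      have hs0 : 0 < s := lt_of_le_of_lt hT hs.1
      have := (hAderiv hs0).exp
      exact (this.congr_deriv (mul_comm _ _)).hasDerivWithinAt
    · apply ContinuousOn.intervalIntegrable
      rw [Set.uIcc_of_le hTt]
      exact (haEcont t).mono (Set.Icc_subset_Icc hT le_rfl)
  -- pointwise bound |a'| ≤ a² + |g|
  have ha'le : ∀ s : ℝ, 0 ≤ s → |a' s| ≤ (a s) ^ 2 + |g s| := by
    intro s hs
    have h0 : a' s ≤ 0 := ha'nonpos s hs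
    rw [abs_of_nonpos h0]
    have h1 : -g s ≤ |g s| := neg_le_abs (g s)
    simp only [hgdef] at h1 ⊢
    linarith
  -- tail of |g|
  have hgabs_int : IntegrableOn (fun s => |g s|) (Set.Ioi 0) := hL1.abs
  set L : ℝ := ∫ s in Set.Ioi 0, |g s| with hLdef
  have hTail : Tendsto (fun T : ℝ => ∫ s in (0:ℝ)..T, |g s|) atTop (𝓝 L) :=
    MeasureTheory.intervalIntegral_tendsto_integral_Ioi 0 hgabs_int tendsto_id
  have hle_L : ∀ t : ℝ, (∫ s in Set.Ioc 0 t, |g s|) ≤ L := by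
    intro t
    apply MeasureTheory.setIntegral_mono_set hgabs_int
    · filter_upwards with x
      exact abs_nonneg _
    · exact HasSubset.Subset.eventuallyLE Set.Ioc_subset_Ioi_self
  -- exp(-A t) → 0
  have hexpAtop : Tendsto (fun t => Real.exp (-A t)) atTop (𝓝 0) :=
    Real.tendsto_exp_atBot.comp (tendsto_neg_atTop_atBot.comp hAtop)
  -- the key remainder estimate
  set R : ℝ → ℝ := fun t => Real.exp (-A t) * ∫ s in Set.Ioc 0 t, W s with hRdef
  have hRnonneg : ∀ t : ℝ, 0 ≤ R t := by
    intro t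
    apply mul_nonneg (Real.exp_pos _).le
    apply MeasureTheory.setIntegral_nonneg measurableSet_Ioc
    intro s _
    exact mul_nonneg (abs_nonneg _) (Real.exp_pos _).le
  have hR : Tendsto R atTop (𝓝 0) := by
    rw [Metric.tendsto_atTop]
    intro ε hε
    -- T₁ : a small beyond T₁
    obtain ⟨T₁', hT₁'⟩ := (eventually_atTop).mp (hlim.eventually
      (gt_mem_nhds (show (0:ℝ) < ε/4 by linarith)))
    -- T₂ : interval integral of |g| close to L beyond T₂
    obtain ⟨T₂, hT₂⟩ := (eventually_atTop).mp (hTail.eventually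
      (lt_mem_nhds (show L - ε/4 < L by linarith)))
    set T : ℝ := max (max T₁' T₂) 0 with hTdef
    have hT0 : 0 ≤ T := le_max_right _ _
    have hTT₁ : T₁' ≤ T := le_trans (le_max_left _ _) (le_max_left _ _)
    have hTT₂ : T₂ ≤ T := le_trans (le_max_right _ _) (le_max_left _ _)
    set K : ℝ := ∫ s in Set.Ioc 0 T, W s with hKdef
    have hKlim : Tendsto (fun t => Real.exp (-A t) * K) atTop (𝓝 0) := by
      simpa using hexpAtop.mul_const K
    obtain ⟨N', hN'⟩ := (eventually_atTop).mp (hKlim.eventually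
      (gt_mem_nhds (show (0:ℝ) < ε/4 by linarith)))
    refine ⟨max N' T, ?_⟩
    intro t ht
    have htT : T ≤ t := le_trans (le_max_right _ _) ht
    have htN : N' ≤ t := le_trans (le_max_left _ _) ht
    have ht0 : (0:ℝ) ≤ t := hT0.trans htT
    -- split the integral at T
    have hsplit : (∫ s in Set.Ioc 0 t, W s) = K + ∫ s in Set.Ioc T t, W s := by
      rw [hKdef, ← MeasureTheory.setIntegral_union (Set.Ioc_disjoint_Ioc_of_le le_rfl)
        measurableSet_Ioc (hWint 0 T le_rfl) (hWint T t hT0),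
        Set.Ioc_union_Ioc_eq_Ioc hT0 htT]
    -- bound the far part
    have hW_le : ∀ s ∈ Set.Ioc T t, W s ≤
        (ε/4) * (a s * Real.exp (A s)) + |g s| * Real.exp (A t) := by
      intro s hs
      have hs0 : (0:ℝ) ≤ s := hT0.trans hs.1.le
      have h1 : |a' s| ≤ (a s) ^ 2 + |g s| := ha'le s hs0
      have h2 : a s ≤ ε/4 := (hT₁' s (hTT₁.trans hs.1.le)).le
      have h3 : Real.exp (A s) ≤ Real.exp (A t) := Real.exp_le_exp.2 (hAmono hs0 hs.2)
      calc W s = |a' s| * Real.exp (A s) := rfl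
        _ ≤ ((a s) ^ 2 + |g s|) * Real.exp (A s) :=
            mul_le_mul_of_nonneg_right h1 (Real.exp_pos _).le
        _ = a s * (a s * Real.exp (A s)) + |g s| * Real.exp (A s) := by ring
        _ ≤ (ε/4) * (a s * Real.exp (A s)) + |g s| * Real.exp (A t) :=
            add_le_add
              (mul_le_mul_of_nonneg_right h2
                (mul_nonneg (hpos s hs0).le (Real.exp_pos _).le))
              (mul_le_mul_of_nonneg_left h3 (abs_nonneg _))
    have hgle : (∫ s in Set.Ioc T t, |g s|) ≤ ε/4 := by
      have hsg : (∫ s in Set.Ioc 0 t, |g s|) =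
          (∫ s in Set.Ioc 0 T, |g s|) + ∫ s in Set.Ioc T t, |g s| := by
        rw [← MeasureTheory.setIntegral_union (Set.Ioc_disjoint_Ioc_of_le le_rfl)
          measurableSet_Ioc (hgint 0 T le_rfl) (hgint T t hT0),
          Set.Ioc_union_Ioc_eq_Ioc hT0 htT]
      have h1 : (∫ s in Set.Ioc 0 t, |g s|) ≤ L := hle_L t
      have h2 : L - ε/4 < ∫ s in Set.Ioc 0 T, |g s| := by
        have := hT₂ T hTT₂
        rwa [intervalIntegral.integral_of_le hT0] at this
      linarith
    have hInt2 : (∫ s in Set.Ioc T t, W s) ≤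
        (ε/4) * (Real.exp (A t) - Real.exp (A T)) +
          (∫ s in Set.Ioc T t, |g s|) * Real.exp (A t) := by
      have hrhsint : IntegrableOn
          (fun s => (ε/4) * (a s * Real.exp (A s)) + |g s| * Real.exp (A t))
          (Set.Ioc T t) := by
        exact ((haEint T t hT0).const_mul (ε/4)).add ((hgint T t hT0).mul_const _)
      have := MeasureTheory.setIntegral_mono_on (hWint T t hT0) hrhsint
        measurableSet_Ioc hW_le
      rwa [MeasureTheory.integral_add ((haEint T t hT0).const_mul (ε/4))
        ((hgint T t hT0).mul_const _), MeasureTheory.integral_const_mul,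
        MeasureTheory.integral_mul_const, hgeA hT0 htT] at this
    -- assemble the estimate
    have hexp1 : Real.exp (-A t) * Real.exp (A t) = 1 := by
      rw [← Real.exp_add]; simp
    have hKb : Real.exp (-A t) * K < ε/4 := hN' t htN
    have h5 : Real.exp (-A t) * (∫ s in Set.Ioc T t, W s) ≤ ε/4 + ε/4 := by
      have h6 := mul_le_mul_of_nonneg_left hInt2 (Real.exp_pos (-A t)).le
      have h7 : Real.exp (-A t) * ((ε/4) * (Real.exp (A t) - Real.exp (A T)) +
          (∫ s in Set.Ioc T t, |g s|) * Real.exp (A t)) =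
          (ε/4) * (1 - Real.exp (-A t) * Real.exp (A T)) +
            (∫ s in Set.Ioc T t, |g s|) := by
        linear_combination ((ε/4) + (∫ s in Set.Ioc T t, |g s|)) * hexp1
      rw [h7] at h6
      have h8 : 0 ≤ Real.exp (-A t) * Real.exp (A T) :=
        mul_nonneg (Real.exp_pos _).le (Real.exp_pos _).le
      nlinarith
    have hRt : R t = Real.exp (-A t) * K + Real.exp (-A t) * ∫ s in Set.Ioc T t, W s := by
      simp only [hRdef]
      rw [hsplit]; ring
    rw [Real.dist_eq, sub_zero, abs_of_nonneg (hRnonneg t), hRt]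
    linarith
  -- norms of C and B
  have hCnorm : ∀ t : ℝ, ‖C t‖ = Real.exp (-A t) := by
    intro t
    simp only [hCdef, hildef]
    rw [Complex.norm_exp]
    congr 1
    simp
  have hBnorm : ∀ s : ℝ, ‖B s‖ = Real.exp (A s) := by
    intro s
    simp only [hBdef, hildef]
    rw [Complex.norm_exp]
    congr 1
    simp
  -- main decomposition, eventually in t
  have hmain : ∀ᶠ t in atTop, (∫ s in Set.Ioc (0:ℝ) t,
      Complex.exp (il * ((t:ℂ) - (s:ℂ))) * (a s : ℂ) *
        (Real.exp (-∫ p in Set.Ioc s t, a p) : ℂ)) =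
      φ t - C t * G 0 + C t * (il * J t) := by
    filter_upwards [eventually_ge_atTop (0:ℝ)] with t ht
    have hpt : ∀ s ∈ Set.Ioc (0:ℝ) t,
        Complex.exp (il * ((t:ℂ) - (s:ℂ))) * (a s : ℂ) *
          (Real.exp (-∫ p in Set.Ioc s t, a p) : ℂ) = C t * ((a s : ℂ) * B s) := by
      intro s hs
      rw [hIocA hs.1.le hs.2, Complex.ofReal_exp]
      simp only [hCdef, hBdef]
      push_cast
      calc Complex.exp (il * ((t:ℂ) - s)) * (a s : ℂ) *
            Complex.exp (-((A t : ℂ) - (A s : ℂ)))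
          = (a s : ℂ) * Complex.exp (il * ((t:ℂ) - s) + -((A t : ℂ) - (A s : ℂ))) := by
            rw [Complex.exp_add]; ring
        _ = (a s : ℂ) * Complex.exp ((il * t - (A t : ℂ)) + ((A s : ℂ) - il * s)) := by
            congr 1
            ring
        _ = (a s : ℂ) * (Complex.exp (il * t - (A t : ℂ)) *
              Complex.exp ((A s : ℂ) - il * s)) := by
            rw [Complex.exp_add]
        _ = _ := by ring
    rw [MeasureTheory.setIntegral_congr_fun measurableSet_Ioc hpt,
      MeasureTheory.integral_const_mul, ← intervalIntegral.integral_of_le ht, key ht]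
    have hCB : C t * B t = 1 := by
      simp only [hCdef, hBdef]
      rw [← Complex.exp_add,
        show (il * (t:ℂ) - (A t : ℂ)) + ((A t : ℂ) - il * (t:ℂ)) = 0 by ring,
        Complex.exp_zero]
    have hCG : C t * G t = φ t := by
      simp only [hGdef]
      calc C t * (φ t * B t) = φ t * (C t * B t) := by ring
        _ = φ t := by rw [hCB, mul_one]
    rw [mul_add, mul_sub, hCG]
  -- the three limits
  have T1 : Tendsto φ atTop (𝓝 0) := by
    have h1 : Tendsto (fun t : ℝ => ((a t : ℝ) : ℂ)) atTop (𝓝 0) := by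
      have := (Complex.continuous_ofReal.tendsto 0).comp hlim
      simpa [Function.comp_def] using this
    have h2 : Tendsto (fun t : ℝ => ((a t : ℂ) - il)) atTop (𝓝 (0 - il)) := h1.sub_const il
    have h3 : Tendsto (fun t : ℝ => ((a t : ℂ)) / ((a t : ℂ) - il)) atTop
        (𝓝 (0 / (0 - il))) := h1.div h2 (by simpa using hil_ne)
    simpa [hφdef] using h3
  have T2 : Tendsto (fun t => C t * G 0) atTop (𝓝 0) := by
    apply squeeze_zero_norm (f := fun t => C t * G 0) (a := fun t => Real.exp (-A t) * ‖G 0‖)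
    · intro t
      rw [norm_mul, hCnorm t]
    · simpa using hexpAtop.mul_const ‖G 0‖
  have hψB_norm : ∀ s : ℝ, ‖ψ s * B s‖ ≤ W s / lam ^ 2 := by
    intro s
    have hψn : ‖ψ s‖ = |a' s| / ‖(a s : ℂ) - il‖ ^ 2 := by
      simp only [hψdef]
      rw [norm_div, norm_pow, Complex.norm_real, Real.norm_eq_abs]
    have h1 : |a' s| / ‖(a s : ℂ) - il‖ ^ 2 ≤ |a' s| / lam ^ 2 := by
      apply div_le_div_of_nonneg_left (abs_nonneg _) (by positivity)
      calc (lam:ℝ) ^ 2 = |lam| ^ 2 := (sq_abs lam).symm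
        _ ≤ ‖(a s : ℂ) - il‖ ^ 2 := pow_le_pow_left₀ (abs_nonneg lam) (hnorm_ge s) 2
    calc ‖ψ s * B s‖ = (|a' s| / ‖(a s : ℂ) - il‖ ^ 2) * Real.exp (A s) := by
          rw [norm_mul, hψn, hBnorm]
      _ ≤ (|a' s| / lam ^ 2) * Real.exp (A s) :=
          mul_le_mul_of_nonneg_right h1 (Real.exp_pos _).le
      _ = W s / lam ^ 2 := by simp only [hWdef]; ring
  have hJnorm : ∀ t : ℝ, 0 ≤ t → ‖J t‖ ≤ (∫ s in Set.Ioc 0 t, W s) / lam ^ 2 := by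
    intro t ht
    have h1 : ‖J t‖ ≤ ∫ s in (0:ℝ)..t, ‖ψ s * B s‖ :=
      intervalIntegral.norm_integral_le_integral_norm ht
    have h2 : (∫ s in (0:ℝ)..t, ‖ψ s * B s‖) ≤ ∫ s in (0:ℝ)..t, W s / lam ^ 2 := by
      apply intervalIntegral.integral_mono_on ht
      · apply ContinuousOn.intervalIntegrable
        rw [Set.uIcc_of_le ht]
        exact ((hψcont.mono hIccIci).mul (hBcont t)).norm
      · apply ContinuousOn.intervalIntegrable
        rw [Set.uIcc_of_le ht]
        exact (hWcont t).div_const _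
      · intro s _
        exact hψB_norm s
    rw [intervalIntegral.integral_div] at h2
    refine (h1.trans h2).trans (le_of_eq ?_)
    rw [intervalIntegral.integral_of_le ht]
  have T3 : Tendsto (fun t => C t * (il * J t)) atTop (𝓝 0) := by
    apply squeeze_zero_norm' (a := fun t => (|lam| / lam ^ 2) * R t)
    · filter_upwards [eventually_ge_atTop (0:ℝ)] with t ht
      have hiln : ‖il‖ = |lam| := by
        simp [hildef]
      rw [norm_mul, norm_mul, hCnorm t, hiln]
      calc Real.exp (-A t) * (|lam| * ‖J t‖)
          ≤ Real.exp (-A t) * (|lam| * ((∫ s in Set.Ioc 0 t, W s) / lam ^ 2)) := by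
            apply mul_le_mul_of_nonneg_left
              (mul_le_mul_of_nonneg_left (hJnorm t ht) (abs_nonneg _)) (Real.exp_pos _).le
        _ = (|lam| / lam ^ 2) * R t := by
            simp only [hRdef]; ring
    · simpa using hR.const_mul (|lam| / lam ^ 2)
  have Tfin : Tendsto (fun t => φ t - C t * G 0 + C t * (il * J t)) atTop (𝓝 0) := by
    have := (T1.sub T2).add T3
    simpa using this
  exact Filter.Tendsto.congr' (Filter.EventuallyEq.symm hmain) Tfin
end

section
/- Let A be a bounded linear operator on a Hilbert space H, T = A*A, f = Ay with y ⊥ N(A), and let a : [0,∞) → (0,∞) be continuous, monotonically decaying to 0 with ∫_0^∞ a = ∞. Then the solution u(t) = ∫_0^t e^{−(t−s)} (T + a(s)I)^{-1} A* f ds of u̇ = −u + (T+a(t)I)^{-1}A*f, u(0) = 0, satisfies lim_{t→∞} ‖u(t) − y‖ = 0. -/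
open ContinuousLinearMap Filter Topology

set_option maxHeartbeats 1000000

/-- Third DSM version: with `T = A*A`, `f = Ay`, `y ⊥ N(A)`, and `a(t) > 0` continuous,
nonincreasing, tending to `0` with divergent integral, the solution
`u(t) = ∫_0^t e^{−(t−s)} (T + a(s)I)⁻¹ A* f ds` of `u̇ = −u + (T+a(t)I)⁻¹A*f, u(0)=0`
converges to `y` in norm. -/
theorem dsm_third_version_convergence
    {H : Type*} [NormedAddCommGroup H] [InnerProductSpace ℂ H] [CompleteSpace H]
    (A : H →L[ℂ] H) (T : H →L[ℂ] H) (hT : T = (adjoint A) ∘L A)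
    (y f : H) (hf : f = A y)
    (hy : ∀ v : H, A v = 0 → (inner ℂ v y : ℂ) = 0)
    (a : ℝ → ℝ)
    (hpos : ∀ t : ℝ, 0 ≤ t → 0 < a t)
    (hcont : ContinuousOn a (Set.Ici 0))
    (hmono : AntitoneOn a (Set.Ici 0))
    (hlim : Tendsto a atTop (𝓝 0))
    (hdiv : ¬ MeasureTheory.IntegrableOn a (Set.Ioi 0))
    (R : ℝ → H →L[ℂ] H)
    (hR : ∀ s : ℝ, 0 ≤ s →
      R s ∘L (T + ((a s : ℂ)) • 1) = 1 ∧ (T + ((a s : ℂ)) • 1) ∘L R s = 1)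
    (u : ℝ → H)
    (hu : ∀ t : ℝ, u t =
      ∫ s in Set.Ioc (0 : ℝ) t, Real.exp (-(t - s)) • (R s ((adjoint A) f))) :
    Tendsto (fun t : ℝ => ‖u t - y‖) atTop (𝓝 0) := by
  classical
  -- `w s` is the integrand kernel
  set w : ℝ → H := fun s => R s ((adjoint A) f) with hw
  have hTy : (adjoint A) f = T y := by rw [hf, hT]; rfl
  -- fundamental identity: `R s (T x) = x - a s • R s x`
  have hid : ∀ s : ℝ, 0 ≤ s → ∀ x : H, R s (T x) = x - (a s : ℂ) • R s x := by
    intro s hs x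
    have h : R s ((T + (a s : ℂ) • 1) x) = x := by
      rw [← ContinuousLinearMap.comp_apply, (hR s hs).1, ContinuousLinearMap.one_apply]
    have h2 : (T + (a s : ℂ) • 1) x = T x + (a s : ℂ) • x := by
      simp [ContinuousLinearMap.add_apply, ContinuousLinearMap.smul_apply]
    rw [h2, map_add, map_smul] at h
    exact eq_sub_of_add_eq h
  -- right-inverse identity: `T (R s v) + a s • R s v = v`
  have hrid : ∀ s : ℝ, 0 ≤ s → ∀ v : H, T (R s v) + (a s : ℂ) • R s v = v := by
    intro s hs v
    have h : (T + (a s : ℂ) • 1) (R s v) = v := by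
      rw [← ContinuousLinearMap.comp_apply, (hR s hs).2, ContinuousLinearMap.one_apply]
    simpa [ContinuousLinearMap.add_apply, ContinuousLinearMap.smul_apply] using h
  -- resolvent bound `‖R s v‖ ≤ ‖v‖ / a s`
  have hbound : ∀ s : ℝ, 0 ≤ s → ∀ v : H, ‖R s v‖ ≤ ‖v‖ / a s := by
    intro s hs v
    have ha := hpos s hs
    set x := R s v with hx
    have hTx : RCLike.re (inner ℂ x (T x) : ℂ) = ‖A x‖ ^ 2 := by
      have h1 : T x = (adjoint A) (A x) := by rw [hT]; rfl
      rw [h1, ContinuousLinearMap.adjoint_inner_right]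
      exact inner_self_eq_norm_sq (A x)
    have hxv : a s * ‖x‖ ^ 2 ≤ ‖x‖ * ‖v‖ := by
      have h1 : RCLike.re (inner ℂ x v : ℂ) = ‖A x‖ ^ 2 + a s * ‖x‖ ^ 2 := by
        rw [← hrid s hs v]
        rw [inner_add_right, inner_smul_right]
        simp only [map_add]
        rw [hTx]
        have : RCLike.re ((a s : ℂ) * (inner ℂ x x : ℂ)) = a s * ‖x‖ ^ 2 := by
          rw [RCLike.re_to_complex, Complex.re_ofReal_mul]
          congr 1
          exact_mod_cast congrArg Complex.re (inner_self_eq_norm_sq_to_K (𝕜 := ℂ) x)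
        rw [this]
      have h2 : RCLike.re (inner ℂ x v : ℂ) ≤ ‖x‖ * ‖v‖ := by
        calc RCLike.re (inner ℂ x v : ℂ) ≤ ‖(inner ℂ x v : ℂ)‖ := RCLike.re_le_norm _
          _ ≤ ‖x‖ * ‖v‖ := norm_inner_le_norm x v
      nlinarith [sq_nonneg (‖A x‖)]
    rcases eq_or_lt_of_le (norm_nonneg x) with h0 | h0
    · rw [← h0]
      positivity
    · rw [le_div_iff₀ ha]
      have := le_of_mul_le_mul_right (by nlinarith : a s * ‖x‖ * ‖x‖ ≤ ‖v‖ * ‖x‖) h0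
      linarith [this]
  -- `w s = y - a s • R s y`
  have hws : ∀ s : ℝ, 0 ≤ s → w s = y - (a s : ℂ) • R s y := by
    intro s hs
    rw [hw]
    simp only
    rw [hTy, hid s hs y]
  have hwsub : ∀ s : ℝ, 0 ≤ s → w s - y = -((a s : ℂ) • R s y) := by
    intro s hs; rw [hws s hs]; abel
  -- uniform bound `‖w s - y‖ ≤ ‖y‖`
  have hwb : ∀ s : ℝ, 0 ≤ s → ‖w s - y‖ ≤ ‖y‖ := by
    intro s hs
    have ha := hpos s hs
    rw [hwsub s hs, norm_neg, norm_smul]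
    have h1 : ‖(a s : ℂ)‖ = a s := by
      rw [Complex.norm_real, Real.norm_eq_abs, abs_of_pos ha]
    rw [h1]
    calc a s * ‖R s y‖ ≤ a s * (‖y‖ / a s) := by
          exact mul_le_mul_of_nonneg_left (hbound s hs y) ha.le
      _ = ‖y‖ := by field_simp
  -- `y` lies in the closure of the range of `T`
  have hyc : y ∈ closure ((LinearMap.range (T : H →ₗ[ℂ] H) : Submodule ℂ H) : Set H) := by
    have hmem : y ∈ ((LinearMap.range (T : H →ₗ[ℂ] H))ᗮ)ᗮ := by
      rw [Submodule.mem_orthogonal]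
      intro v hv
      have hTv : (inner ℂ (T v) v : ℂ) = 0 := by
        exact (Submodule.mem_orthogonal (LinearMap.range (T : H →ₗ[ℂ] H)) v).mp hv (T v) ⟨v, rfl⟩
      have hAv : A v = 0 := by
        have h1 : (inner ℂ (T v) v : ℂ) = inner ℂ (A v) (A v) := by
          have h2 : T v = (adjoint A) (A v) := by rw [hT]; rfl
          rw [h2, ContinuousLinearMap.adjoint_inner_left]
        rw [h1] at hTv
        exact inner_self_eq_zero.mp hTv
      exact hy v hAv
    rw [Submodule.orthogonal_orthogonal_eq_closure] at hmem
    exact hmem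
  -- convergence of `w s` to `y`
  have hconv : ∀ ε : ℝ, 0 < ε → ∃ s₀ : ℝ, 0 ≤ s₀ ∧ ∀ s, s₀ ≤ s → ‖w s - y‖ < ε := by
    intro ε hε
    obtain ⟨b, hb, hby⟩ := Metric.mem_closure_iff.mp hyc (ε / 2) (by linarith)
    obtain ⟨z, hz⟩ := hb
    have hz' : T z = b := hz
    rw [Metric.tendsto_atTop] at hlim
    obtain ⟨N, hN⟩ := hlim (ε / (4 * (‖z‖ + 1))) (by positivity)
    refine ⟨max N 0, le_max_right _ _, fun s hs => ?_⟩
    have hs0 : (0 : ℝ) ≤ s := le_trans (le_max_right _ _) hs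
    have ha := hpos s hs0
    have has : a s < ε / (4 * (‖z‖ + 1)) := by
      have := hN s (le_trans (le_max_left _ _) hs)
      rw [Real.dist_eq, sub_zero, abs_of_pos ha] at this
      exact this
    -- w s - y = -(a • R s (y - T z)) - (a • R s (T z))
    have hsplit : w s - y = -((a s : ℂ) • R s (y - T z)) - (a s : ℂ) • R s (T z) := by
      rw [hwsub s hs0, map_sub, smul_sub]
      abel
    have h1 : ‖(a s : ℂ) • R s (y - T z)‖ ≤ ‖y - T z‖ := by
      rw [norm_smul, Complex.norm_real, Real.norm_eq_abs, abs_of_pos ha]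
      calc a s * ‖R s (y - T z)‖ ≤ a s * (‖y - T z‖ / a s) :=
            mul_le_mul_of_nonneg_left (hbound s hs0 _) ha.le
        _ = ‖y - T z‖ := by field_simp
    have h2 : ‖(a s : ℂ) • R s (T z)‖ ≤ 2 * (a s * ‖z‖) := by
      rw [hid s hs0 z, smul_sub, smul_smul]
      have hca : ‖(a s : ℂ)‖ = a s := by
        rw [Complex.norm_real, Real.norm_eq_abs, abs_of_pos ha]
      have e1 : ‖(a s : ℂ) • z‖ = a s * ‖z‖ := by rw [norm_smul, hca]
      have e2 : ‖((a s : ℂ) * (a s : ℂ)) • R s z‖ ≤ a s * ‖z‖ := by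
        rw [norm_smul, norm_mul, hca]
        calc a s * a s * ‖R s z‖ ≤ a s * a s * (‖z‖ / a s) := by
              have := hbound s hs0 z
              nlinarith [norm_nonneg (R s z)]
          _ = a s * ‖z‖ := by field_simp
      calc ‖(a s : ℂ) • z - ((a s : ℂ) * (a s : ℂ)) • R s z‖
          ≤ ‖(a s : ℂ) • z‖ + ‖((a s : ℂ) * (a s : ℂ)) • R s z‖ := norm_sub_le _ _
        _ ≤ a s * ‖z‖ + a s * ‖z‖ := by rw [e1]; linarith
        _ = 2 * (a s * ‖z‖) := by ring
    have hby' : ‖y - T z‖ < ε / 2 := by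
      rw [hz'] ; rw [dist_eq_norm] at hby ; exact hby
    have hlast : 2 * (a s * ‖z‖) < ε / 2 := by
      have hz1 : ‖z‖ + 1 > 0 := by positivity
      have : a s * ‖z‖ < (ε / (4 * (‖z‖ + 1))) * (‖z‖ + 1) := by
        have h3 : a s * ‖z‖ ≤ a s * (‖z‖ + 1) := by nlinarith [norm_nonneg z]
        calc a s * ‖z‖ ≤ a s * (‖z‖ + 1) := h3
          _ < (ε / (4 * (‖z‖ + 1))) * (‖z‖ + 1) := by
              exact mul_lt_mul_of_pos_right has hz1
      have h4 : (ε / (4 * (‖z‖ + 1))) * (‖z‖ + 1) = ε / 4 := by field_simp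
      rw [h4] at this
      linarith
    calc ‖w s - y‖ ≤ ‖(a s : ℂ) • R s (y - T z)‖ + ‖(a s : ℂ) • R s (T z)‖ := by
          rw [hsplit]
          calc ‖-((a s : ℂ) • R s (y - T z)) - (a s : ℂ) • R s (T z)‖
              ≤ ‖-((a s : ℂ) • R s (y - T z))‖ + ‖(a s : ℂ) • R s (T z)‖ := norm_sub_le _ _
            _ = _ := by rw [norm_neg]
      _ < ε / 2 + ε / 2 := by
          have := lt_of_le_of_lt h2 hlast
          have := lt_of_le_of_lt h1 hby'
          linarith [lt_of_le_of_lt h1 hby', lt_of_le_of_lt h2 hlast]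
      _ = ε := by ring
  -- continuity of `w` on `Ici 0`
  have hwc : ContinuousOn w (Set.Ici (0 : ℝ)) := by
    intro s₀ hs₀
    have hs₀' : (0 : ℝ) ≤ s₀ := hs₀
    have ha0 := hpos s₀ hs₀'
    have haw : ContinuousWithinAt a (Set.Ici 0) s₀ := hcont s₀ hs₀
    have hev : ∀ᶠ s in 𝓝[Set.Ici (0:ℝ)] s₀, a s₀ / 2 < a s :=
      haw.eventually (eventually_gt_nhds (half_lt_self ha0))
    have hev0 : ∀ᶠ s in 𝓝[Set.Ici (0:ℝ)] s₀, s ∈ Set.Ici (0:ℝ) :=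
      eventually_mem_nhdsWithin
    rw [ContinuousWithinAt, ← tendsto_sub_nhds_zero_iff]
    apply squeeze_zero_norm'
      (a := fun s => |a s - a s₀| * (2 * ‖R s₀ ((adjoint A) f)‖ / a s₀))
    · filter_upwards [hev, hev0] with s h2 h0
      have hs0 : (0 : ℝ) ≤ s := h0
      have has : 0 < a s := hpos s hs0
      -- the resolvent difference identity
      have hdiff : w s - w s₀ = ((a s₀ - a s : ℝ) : ℂ) • R s (R s₀ ((adjoint A) f)) := by
        set v := (adjoint A) f with hv
        set x := R s₀ v with hxd
        have h1 : T x + (a s₀ : ℂ) • x = v := hrid s₀ hs₀' v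
        have h2' : R s (T x) = x - (a s : ℂ) • R s x := hid s hs0 x
        have h3 : R s v = x + ((a s₀ - a s : ℝ) : ℂ) • R s x := by
          rw [← h1, map_add, map_smul, h2']
          push_cast
          rw [sub_smul]
          abel
        show R s v - R s₀ v = _
        rw [h3, ← hxd]
        abel
      rw [hdiff, norm_smul]
      have hnorm : ‖((a s₀ - a s : ℝ) : ℂ)‖ = |a s₀ - a s| := by
        rw [Complex.norm_real, Real.norm_eq_abs]
      rw [hnorm, abs_sub_comm]
      have hR2 : ‖R s (R s₀ ((adjoint A) f))‖ ≤ 2 * ‖R s₀ ((adjoint A) f)‖ / a s₀ := by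
        calc ‖R s (R s₀ ((adjoint A) f))‖ ≤ ‖R s₀ ((adjoint A) f)‖ / a s :=
              hbound s hs0 _
          _ ≤ ‖R s₀ ((adjoint A) f)‖ / (a s₀ / 2) := by
              gcongr
          _ = 2 * ‖R s₀ ((adjoint A) f)‖ / a s₀ := by
              field_simp
      gcongr
    · have h1 : Tendsto (fun s => |a s - a s₀|) (𝓝[Set.Ici (0:ℝ)] s₀) (𝓝 0) := by
        have h0 : Tendsto (fun s => a s - a s₀) (𝓝[Set.Ici (0:ℝ)] s₀) (𝓝 (a s₀ - a s₀)) :=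
          Tendsto.sub haw tendsto_const_nhds
        rw [sub_self] at h0
        simpa using h0.abs
      have := h1.mul_const (2 * ‖R s₀ ((adjoint A) f)‖ / a s₀)
      simpa using this
  -- exponential integral helper
  have hexp : ∀ t b c : ℝ, b ≤ c →
      (∫ s in Set.Ioc b c, Real.exp (-(t - s))) =
        Real.exp (-(t - c)) - Real.exp (-(t - b)) := by
    intro t b c hbc
    rw [← intervalIntegral.integral_of_le hbc]
    have : (fun s => Real.exp (-(t - s))) = fun s => Real.exp (s - t) := by
      funext s; ring_nf
    rw [this]
    rw [intervalIntegral.integral_comp_sub_right (fun x => Real.exp x) t,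
      integral_exp]
    ring_nf
  -- integrability of the integrand
  have hint : ∀ t b c : ℝ, 0 ≤ b →
      MeasureTheory.IntegrableOn (fun s => Real.exp (-(t - s)) • (w s - y))
        (Set.Ioc b c) MeasureTheory.volume := by
    intro t b c hb
    rcases le_or_gt b c with hbc | hbc
    · have hc : ContinuousOn (fun s => Real.exp (-(t - s)) • (w s - y)) (Set.Icc b c) := by
        refine ContinuousOn.smul (f := fun s => Real.exp (-(t - s))) ?_ ?_
        · exact (Real.continuous_exp.comp ((continuous_const.sub continuous_id).neg)).continuousOn
        · exact (hwc.mono (fun x hx => le_trans hb hx.1)).sub continuousOn_const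
      exact (hc.integrableOn_Icc).mono_set Set.Ioc_subset_Icc_self
    · rw [Set.Ioc_eq_empty (not_lt.mpr hbc.le)]
      simp
  -- main argument
  rw [Metric.tendsto_atTop]
  intro ε hε
  obtain ⟨s₀, hs₀0, hs₀⟩ := hconv (ε / 3) (by linarith)
  obtain ⟨D, hD⟩ : ∃ D : ℝ, D = s₀ * Real.exp s₀ * ‖y‖ + ‖y‖ := ⟨_, rfl⟩
  have hD0 : 0 ≤ D := by rw [hD]; positivity
  have htend : Tendsto (fun t : ℝ => D * Real.exp (-t)) atTop (𝓝 0) := by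
    simpa using (Real.tendsto_exp_neg_atTop_nhds_zero.const_mul D)
  rw [Metric.tendsto_atTop] at htend
  obtain ⟨N₁, hN₁⟩ := htend (ε / 3) (by linarith)
  refine ⟨max N₁ s₀, fun t ht => ?_⟩
  have hts₀ : s₀ ≤ t := le_trans (le_max_right _ _) ht
  have ht0 : (0 : ℝ) ≤ t := le_trans hs₀0 hts₀
  have hDe : D * Real.exp (-t) < ε / 3 := by
    have := hN₁ t (le_trans (le_max_left _ _) ht)
    rw [Real.dist_eq, sub_zero, abs_of_nonneg (by positivity)] at this
    exact this
  -- decompose the integral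
  have hFint := hint t 0 t le_rfl
  have hGint : MeasureTheory.IntegrableOn (fun s => Real.exp (-(t - s)) • y)
      (Set.Ioc (0:ℝ) t) MeasureTheory.volume := by
    have hc : ContinuousOn (fun s => Real.exp (-(t - s)) • y) (Set.Icc (0:ℝ) t) :=
      ((Real.continuous_exp.comp ((continuous_const.sub continuous_id).neg)).continuousOn).smul continuousOn_const
    exact hc.integrableOn_Icc.mono_set Set.Ioc_subset_Icc_self
  have hut : u t = (∫ s in Set.Ioc (0:ℝ) t, Real.exp (-(t - s)) • (w s - y)) +
      ∫ s in Set.Ioc (0:ℝ) t, Real.exp (-(t - s)) • y := by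
    rw [hu t, ← MeasureTheory.integral_add hFint hGint]
    apply MeasureTheory.setIntegral_congr_fun measurableSet_Ioc
    intro s hs
    simp only
    rw [smul_sub]
    abel
  have hGval : (∫ s in Set.Ioc (0:ℝ) t, Real.exp (-(t - s)) • y) =
      (1 - Real.exp (-t)) • y := by
    rw [integral_smul_const, hexp t 0 t ht0]
    norm_num
  have huty : u t - y = (∫ s in Set.Ioc (0:ℝ) t, Real.exp (-(t - s)) • (w s - y)) -
      Real.exp (-t) • y := by
    rw [hut, hGval, sub_smul, one_smul]
    abel
  -- split the error integral at s₀
  have hsplitI : (∫ s in Set.Ioc (0:ℝ) t, Real.exp (-(t - s)) • (w s - y)) =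
      (∫ s in Set.Ioc (0:ℝ) s₀, Real.exp (-(t - s)) • (w s - y)) +
      ∫ s in Set.Ioc s₀ t, Real.exp (-(t - s)) • (w s - y) := by
    rw [← Set.Ioc_union_Ioc_eq_Ioc hs₀0 hts₀]
    exact MeasureTheory.setIntegral_union (Set.Ioc_disjoint_Ioc_of_le le_rfl) measurableSet_Ioc
      (hint t 0 s₀ le_rfl) (hint t s₀ t hs₀0)
  -- estimate the first piece
  have hI1 : ‖∫ s in Set.Ioc (0:ℝ) s₀, Real.exp (-(t - s)) • (w s - y)‖ ≤
      Real.exp (-(t - s₀)) * ‖y‖ * s₀ := by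
    have hfin : MeasureTheory.volume (Set.Ioc (0:ℝ) s₀) < ⊤ := by
      rw [Real.volume_Ioc]
      exact ENNReal.ofReal_lt_top
    have hb := MeasureTheory.norm_setIntegral_le_of_norm_le_const hfin
      (C := Real.exp (-(t - s₀)) * ‖y‖) (f := fun s => Real.exp (-(t - s)) • (w s - y))
      (fun s hs => by
        rw [norm_smul, Real.norm_eq_abs, abs_of_pos (Real.exp_pos _)]
        have h1 : Real.exp (-(t - s)) ≤ Real.exp (-(t - s₀)) := by
          apply Real.exp_le_exp.mpr; linarith [hs.2]
        exact mul_le_mul h1 (hwb s hs.1.le) (norm_nonneg _) (Real.exp_pos _).le)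
    calc ‖∫ s in Set.Ioc (0:ℝ) s₀, Real.exp (-(t - s)) • (w s - y)‖ ≤
          Real.exp (-(t - s₀)) * ‖y‖ * (MeasureTheory.volume (Set.Ioc (0:ℝ) s₀)).toReal := hb
      _ = Real.exp (-(t - s₀)) * ‖y‖ * s₀ := by
          rw [Real.volume_Ioc, ENNReal.toReal_ofReal (by linarith)]
          ring_nf
  -- estimate the second piece
  have hI2 : ‖∫ s in Set.Ioc s₀ t, Real.exp (-(t - s)) • (w s - y)‖ ≤ ε / 3 := by
    calc ‖∫ s in Set.Ioc s₀ t, Real.exp (-(t - s)) • (w s - y)‖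
        ≤ ∫ s in Set.Ioc s₀ t, ‖Real.exp (-(t - s)) • (w s - y)‖ :=
          MeasureTheory.norm_integral_le_integral_norm _
      _ ≤ ∫ s in Set.Ioc s₀ t, Real.exp (-(t - s)) * (ε / 3) := by
          apply MeasureTheory.setIntegral_mono_on
          · exact (hint t s₀ t hs₀0).norm
          · apply MeasureTheory.Integrable.mul_const
            have hc : ContinuousOn (fun s => Real.exp (-(t - s))) (Set.Icc s₀ t) :=
              (Real.continuous_exp.comp ((continuous_const.sub continuous_id).neg)).continuousOn
            exact hc.integrableOn_Icc.mono_set Set.Ioc_subset_Icc_self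
          · exact measurableSet_Ioc
          · intro s hs
            rw [norm_smul, Real.norm_eq_abs, abs_of_pos (Real.exp_pos _)]
            exact mul_le_mul_of_nonneg_left (hs₀ s hs.1.le).le (Real.exp_pos _).le
      _ = (Real.exp (-(t - t)) - Real.exp (-(t - s₀))) * (ε / 3) := by
          rw [MeasureTheory.integral_mul_const, hexp t s₀ t hts₀]
      _ ≤ ε / 3 := by
          have h1 : Real.exp (-(t - t)) = 1 := by norm_num
          have h2 : 0 < Real.exp (-(t - s₀)) := Real.exp_pos _
          nlinarith
  -- combine
  have hfinal : ‖u t - y‖ ≤ D * Real.exp (-t) + ε / 3 := by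
    rw [huty, hsplitI]
    have h3 : Real.exp (-(t - s₀)) * ‖y‖ * s₀ + Real.exp (-t) * ‖y‖ ≤ D * Real.exp (-t) := by
      rw [hD]
      have : Real.exp (-(t - s₀)) = Real.exp s₀ * Real.exp (-t) := by
        rw [← Real.exp_add]; ring_nf
      rw [this]
      have h4 : 0 ≤ Real.exp (-t) := (Real.exp_pos _).le
      nlinarith [norm_nonneg y, Real.exp_pos s₀, Real.exp_pos (-t)]
    calc ‖(∫ s in Set.Ioc (0:ℝ) s₀, Real.exp (-(t - s)) • (w s - y)) +
          (∫ s in Set.Ioc s₀ t, Real.exp (-(t - s)) • (w s - y)) - Real.exp (-t) • y‖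
        ≤ ‖∫ s in Set.Ioc (0:ℝ) s₀, Real.exp (-(t - s)) • (w s - y)‖ +
          ‖∫ s in Set.Ioc s₀ t, Real.exp (-(t - s)) • (w s - y)‖ +
          ‖Real.exp (-t) • y‖ := by
            refine le_trans (norm_sub_le _ _) ?_
            exact add_le_add_left (norm_add_le _ _) _
      _ ≤ Real.exp (-(t - s₀)) * ‖y‖ * s₀ + ε / 3 + Real.exp (-t) * ‖y‖ := by
            gcongr
            rw [norm_smul, Real.norm_eq_abs, abs_of_pos (Real.exp_pos _)]
      _ ≤ D * Real.exp (-t) + ε / 3 := by linarith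
  rw [Real.dist_eq, sub_zero, abs_of_nonneg (norm_nonneg _)]
  calc ‖u t - y‖ ≤ D * Real.exp (-t) + ε / 3 := hfinal
    _ < ε / 3 + ε / 3 := by linarith
    _ < ε := by linarith
end

section
/- Under the assumptions of the third DSM version with noisy data: if ‖f_δ − f‖ ≤ δ and u_δ(t) = ∫_0^t e^{−(t−s)}(T+a(s)I)^{-1} A* f_δ ds, u(t) the solution with exact data f, then ‖u_δ(t) − u(t)‖ ≤ δ/(2√(a(t))) for all t ≥ 0. -/
open ContinuousLinearMap Filter Topology

open MeasureTheory
local notation "⟪" x ", " y "⟫" => @inner ℂ _ _ x y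

/-- Key operator bound: `‖(T+αI)⁻¹ A* g‖ ≤ ‖g‖ / (2√α)`. -/
lemma dsm_key_bound {H : Type*} [NormedAddCommGroup H] [InnerProductSpace ℂ H] [CompleteSpace H]
    (A T : H →L[ℂ] H) (hT : T = (adjoint A) ∘L A)
    (α : ℝ) (hα : 0 < α) (Rα : H →L[ℂ] H)
    (hR2 : (T + ((α : ℂ)) • 1) ∘L Rα = 1) (g : H) :
    ‖Rα ((adjoint A) g)‖ ≤ ‖g‖ / (2 * Real.sqrt α) := by
  set w := Rα ((adjoint A) g) with hw
  have h1 : T w + (α : ℂ) • w = (adjoint A) g := by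
    have := congrArg (fun L => L ((adjoint A) g)) hR2
    simpa [ContinuousLinearMap.add_apply, ContinuousLinearMap.smul_apply] using this
  have h2 : ⟪w, T w + (α : ℂ) • w⟫ = ⟪A w, g⟫ := by
    rw [h1, ContinuousLinearMap.adjoint_inner_right]
  have h3 : ⟪w, T w⟫ = (‖A w‖ : ℂ) ^ 2 := by
    rw [hT]
    simp only [ContinuousLinearMap.coe_comp', Function.comp_apply]
    rw [ContinuousLinearMap.adjoint_inner_right, inner_self_eq_norm_sq_to_K]
    norm_cast
  have h4 : (‖A w‖ : ℝ) ^ 2 + α * ‖w‖ ^ 2 = (⟪A w, g⟫ : ℂ).re := by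
    have := congrArg Complex.re h2
    rw [inner_add_right, h3, inner_smul_right, inner_self_eq_norm_sq_to_K] at this
    norm_cast at this
    simp only [Complex.add_re, Complex.mul_re, ← Complex.ofReal_pow, Complex.ofReal_re,
      Complex.ofReal_im, mul_zero, zero_mul, sub_zero] at this
    rw [← this]
    congr 2
  have h5 : (⟪A w, g⟫ : ℂ).re ≤ ‖A w‖ * ‖g‖ := by
    calc (⟪A w, g⟫ : ℂ).re ≤ ‖(⟪A w, g⟫ : ℂ)‖ := Complex.re_le_norm _
      _ ≤ ‖A w‖ * ‖g‖ := norm_inner_le_norm _ _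
  have h6 : α * ‖w‖ ^ 2 ≤ ‖g‖ ^ 2 / 4 := by nlinarith [sq_nonneg (‖A w‖ - ‖g‖ / 2)]
  have hs : Real.sqrt α > 0 := Real.sqrt_pos.mpr hα
  have hsq : Real.sqrt α ^ 2 = α := Real.sq_sqrt hα.le
  have hwn : 0 ≤ ‖w‖ := norm_nonneg _
  have hgn : 0 ≤ ‖g‖ := norm_nonneg _
  have key : ‖w‖ ^ 2 ≤ (‖g‖ / (2 * Real.sqrt α)) ^ 2 := by
    have : (‖g‖ / (2 * Real.sqrt α)) ^ 2 = ‖g‖ ^ 2 / (4 * α) := by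
      rw [div_pow, mul_pow, hsq]; norm_num
    rw [this, le_div_iff₀ (by positivity)]
    nlinarith
  have hc : 0 ≤ ‖g‖ / (2 * Real.sqrt α) := by positivity
  nlinarith

/-- The resolvent-type family `R` is pointwise continuous on `[0, ∞)`. -/
lemma dsm_R_cont {H : Type*} [NormedAddCommGroup H] [InnerProductSpace ℂ H] [CompleteSpace H]
    (T : H →L[ℂ] H) (a : ℝ → ℝ) (hcont : ContinuousOn a (Set.Ici 0))
    (R : ℝ → H →L[ℂ] H)
    (hR : ∀ s : ℝ, 0 ≤ s →
      R s ∘L (T + ((a s : ℂ)) • 1) = 1 ∧ (T + ((a s : ℂ)) • 1) ∘L R s = 1)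
    (v : H) : ContinuousOn (fun s => R s v) (Set.Ici 0) := by
  have hc1 : ContinuousOn (fun s : ℝ => T + ((a s : ℂ)) • (1 : H →L[ℂ] H)) (Set.Ici 0) :=
    continuousOn_const.add
      (((Complex.continuous_ofReal.comp_continuousOn hcont)).smul continuousOn_const)
  have hc2 : ContinuousOn (fun s : ℝ => Ring.inverse (T + ((a s : ℂ)) • (1 : H →L[ℂ] H)))
      (Set.Ici 0) := by
    intro s hs
    have hu : IsUnit (T + ((a s : ℂ)) • (1 : H →L[ℂ] H)) := by
      exact ⟨⟨T + ((a s : ℂ)) • 1, R s, (hR s hs).2, (hR s hs).1⟩, rfl⟩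
    obtain ⟨u, hu⟩ := hu
    have hca : ContinuousAt (Ring.inverse : (H →L[ℂ] H) → (H →L[ℂ] H))
        (T + ((a s : ℂ)) • (1 : H →L[ℂ] H)) := hu ▸ NormedRing.inverse_continuousAt u
    exact ContinuousAt.comp_continuousWithinAt
      (f := fun s : ℝ => T + ((a s : ℂ)) • (1 : H →L[ℂ] H)) hca (hc1 s hs)
  have hRe : ∀ s ∈ Set.Ici (0 : ℝ),
      R s v = Ring.inverse (T + ((a s : ℂ)) • (1 : H →L[ℂ] H)) v := by
    intro s hs
    have : Ring.inverse (T + ((a s : ℂ)) • (1 : H →L[ℂ] H))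
        = (((⟨T + ((a s : ℂ)) • 1, R s, (hR s hs).2, (hR s hs).1⟩ : (H →L[ℂ] H)ˣ)⁻¹ : (H →L[ℂ] H)ˣ) : H →L[ℂ] H) :=
      Ring.inverse_unit (⟨T + ((a s : ℂ)) • 1, R s, (hR s hs).2, (hR s hs).1⟩ : (H →L[ℂ] H)ˣ)
    rw [this]
    rfl
  exact (((ContinuousLinearMap.apply ℂ H v).continuous.comp_continuousOn hc2).congr hRe)

/-- Noisy-data estimate for the third DSM version: if `‖f_δ − f‖ ≤ δ` then
`‖u_δ(t) − u(t)‖ ≤ δ/(2√(a(t)))` for all `t ≥ 0`. -/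
theorem dsm_third_version_noise_estimate
    {H : Type*} [NormedAddCommGroup H] [InnerProductSpace ℂ H] [CompleteSpace H]
    (A : H →L[ℂ] H) (T : H →L[ℂ] H) (hT : T = (adjoint A) ∘L A)
    (f fδ : H) (δ : ℝ) (hδ : 0 ≤ δ) (hnoise : ‖fδ - f‖ ≤ δ)
    (a : ℝ → ℝ)
    (hpos : ∀ t : ℝ, 0 ≤ t → 0 < a t)
    (hcont : ContinuousOn a (Set.Ici 0))
    (hmono : AntitoneOn a (Set.Ici 0))
    (R : ℝ → H →L[ℂ] H)
    (hR : ∀ s : ℝ, 0 ≤ s →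
      R s ∘L (T + ((a s : ℂ)) • 1) = 1 ∧ (T + ((a s : ℂ)) • 1) ∘L R s = 1)
    (u uδ : ℝ → H)
    (hu : ∀ t : ℝ, u t =
      ∫ s in Set.Ioc (0 : ℝ) t, Real.exp (-(t - s)) • (R s ((adjoint A) f)))
    (huδ : ∀ t : ℝ, uδ t =
      ∫ s in Set.Ioc (0 : ℝ) t, Real.exp (-(t - s)) • (R s ((adjoint A) fδ))) :
    ∀ t : ℝ, 0 ≤ t → ‖uδ t - u t‖ ≤ δ / (2 * Real.sqrt (a t)) := by
  intro t ht
  set g : H := fδ - f with hg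
  have hat : 0 < a t := hpos t ht
  set M : ℝ := δ / (2 * Real.sqrt (a t)) with hM
  have hMnn : 0 ≤ M := by positivity
  -- integrability of the integrands
  have hint : ∀ v : H, IntegrableOn (fun s => Real.exp (-(t - s)) • R s v)
      (Set.Ioc 0 t) (volume) := by
    intro v
    have hcR : ContinuousOn (fun s => Real.exp (-(t - s)) • R s v) (Set.Icc 0 t) := by
      refine ContinuousOn.smul (f := fun s => Real.exp (-(t - s))) ?_ ((dsm_R_cont T a hcont R hR v).mono (fun x hx => hx.1))
      exact (Real.continuous_exp.comp ((continuous_const.sub continuous_id).neg)).continuousOn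
    exact (hcR.integrableOn_Icc).mono_set Set.Ioc_subset_Icc_self
  have hdiff : uδ t - u t
      = ∫ s in Set.Ioc (0 : ℝ) t, Real.exp (-(t - s)) • (R s ((adjoint A) g)) := by
    rw [huδ, hu, ← MeasureTheory.integral_sub (hint _) (hint _)]
    simp only [hg, map_sub, smul_sub]
  -- pointwise bound
  have hbound : ∀ s ∈ Set.Ioc (0 : ℝ) t,
      ‖Real.exp (-(t - s)) • (R s ((adjoint A) g))‖ ≤ Real.exp (-(t - s)) * M := by
    intro s hs
    have hs0 : (0 : ℝ) ≤ s := hs.1.le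
    rw [norm_smul, Real.norm_eq_abs, abs_of_pos (Real.exp_pos _)]
    have h1 := dsm_key_bound A T hT (a s) (hpos s hs0) (R s) (hR s hs0).2 g
    have hsqle : Real.sqrt (a t) ≤ Real.sqrt (a s) :=
      Real.sqrt_le_sqrt (hmono hs0 ht hs.2)
    have h2 : ‖g‖ / (2 * Real.sqrt (a s)) ≤ δ / (2 * Real.sqrt (a t)) := by
      have hsp : 0 < Real.sqrt (a t) := Real.sqrt_pos.mpr hat
      gcongr
    have := h1.trans h2
    have hexp : 0 < Real.exp (-(t - s)) := Real.exp_pos _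
    exact mul_le_mul_of_nonneg_left (this.trans_eq hM.symm) hexp.le
  -- norm of integral bound
  have hintb : IntegrableOn (fun s => Real.exp (-(t - s)) * M) (Set.Ioc 0 t) volume := by
    have : ContinuousOn (fun s : ℝ => Real.exp (-(t - s)) * M) (Set.Icc 0 t) :=
      ((Real.continuous_exp.comp ((continuous_const.sub continuous_id).neg)).continuousOn).mul continuousOn_const
    exact (this.integrableOn_Icc).mono_set Set.Ioc_subset_Icc_self
  have hnorm : ‖uδ t - u t‖ ≤ ∫ s in Set.Ioc (0 : ℝ) t, Real.exp (-(t - s)) * M := by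
    rw [hdiff]
    refine MeasureTheory.norm_integral_le_of_norm_le hintb ?_
    exact (ae_restrict_iff' measurableSet_Ioc).2 (Filter.Eventually.of_forall hbound)
  have hval : ∫ s in Set.Ioc (0 : ℝ) t, Real.exp (-(t - s)) * M
      = (1 - Real.exp (-t)) * M := by
    rw [← intervalIntegral.integral_of_le ht, intervalIntegral.integral_mul_const]
    congr 1
    have heq : (fun s : ℝ => Real.exp (-(t - s))) = fun s : ℝ => Real.exp (s - t) := by
      funext s; rw [neg_sub]
    rw [show (∫ s in (0:ℝ)..t, Real.exp (-(t - s))) = ∫ s in (0:ℝ)..t, Real.exp (s - t) by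
      simp [neg_sub]]
    rw [intervalIntegral.integral_comp_sub_right Real.exp t]
    simp [integral_exp, Real.exp_zero]
  have : ‖uδ t - u t‖ ≤ (1 - Real.exp (-t)) * M := hval ▸ hnorm
  have hexpnn : 0 ≤ Real.exp (-t) := (Real.exp_pos _).le
  nlinarith
end

section
/- Let T ≥ 0 be a bounded selfadjoint operator on H, a > 0, B = a(T+aI)^{-1}, and w ∈ H with w ⊥ N(T). Then lim_{n→∞} ‖Bⁿ w‖ = 0. -/
open ContinuousLinearMap Filter Topology

/-- For nonnegative bounded selfadjoint `T`, `a > 0`, `B = a(T+aI)⁻¹`, and `w ⊥ N(T)`,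
one has `‖Bⁿ w‖ → 0`. -/
theorem iterates_tendsto_zero
    {H : Type*} [NormedAddCommGroup H] [InnerProductSpace ℂ H] [CompleteSpace H]
    (T : H →L[ℂ] H) (hT : IsSelfAdjoint T)
    (hpos : ∀ x : H, 0 ≤ (inner ℂ (T x) x : ℂ).re)
    (a : ℝ) (ha : 0 < a)
    (Tinv : H →L[ℂ] H)
    (h₁ : Tinv ∘L (T + (a : ℂ) • 1) = 1) (h₂ : (T + (a : ℂ) • 1) ∘L Tinv = 1)
    (B : H →L[ℂ] H) (hBdef : B = (a : ℂ) • Tinv)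
    (w : H) (hw : ∀ u : H, T u = 0 → (inner ℂ u w : ℂ) = 0) :
    Tendsto (fun n : ℕ => ‖(B ^ n) w‖) atTop (𝓝 0) := by
  have hsT : ∀ x y : H, (inner ℂ (T x) y : ℂ) = inner ℂ x (T y) :=
    (ContinuousLinearMap.isSelfAdjoint_iff_isSymmetric.mp hT)
  -- T + a•1 applied pointwise inverses
  have h₁' : ∀ x : H, Tinv (T x + (a : ℂ) • x) = x := by
    intro x
    have := ContinuousLinearMap.ext_iff.mp h₁ x
    simpa using this
  have h₂' : ∀ x : H, T (Tinv x) + (a : ℂ) • Tinv x = x := by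
    intro x
    have := ContinuousLinearMap.ext_iff.mp h₂ x
    simpa using this
  -- symmetry of T + a•1
  have hsTa : ∀ x y : H, (inner ℂ (T x + (a : ℂ) • x) y : ℂ)
      = inner ℂ x (T y + (a : ℂ) • y) := by
    intro x y
    rw [inner_add_left, inner_add_right, hsT, inner_smul_left, inner_smul_right]
    simp
  -- symmetry of Tinv
  have hsinv : ∀ x y : H, (inner ℂ (Tinv x) y : ℂ) = inner ℂ x (Tinv y) := by
    intro x y
    calc (inner ℂ (Tinv x) y : ℂ)
        = inner ℂ (Tinv x) (T (Tinv y) + (a : ℂ) • Tinv y) := by rw [h₂' y]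
      _ = inner ℂ (T (Tinv x) + (a : ℂ) • Tinv x) (Tinv y) := (hsTa _ _).symm
      _ = inner ℂ x (Tinv y) := by rw [h₂' x]
  -- symmetry of B
  have hsB : ∀ x y : H, (inner ℂ (B x) y : ℂ) = inner ℂ x (B y) := by
    intro x y
    rw [hBdef]
    simp only [ContinuousLinearMap.smul_apply, inner_smul_left, inner_smul_right,
      Complex.conj_ofReal, hsinv]
  -- key inequality : ‖B y‖^2 ≤ re ⟪B y, y⟫
  have hBB : ∀ y : H, ‖B y‖ ^ 2 ≤ (inner ℂ (B y) y : ℂ).re := by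
    intro y
    set z := Tinv y with hz
    have e1 : Tinv (T z) = z - (a : ℂ) • Tinv z := by
      have h3 : Tinv (T z) + (a : ℂ) • Tinv z = z := by
        have := h₁' z
        rwa [map_add, map_smul] at this
      exact eq_sub_of_add_eq h3
    have e2 : B y - B (B y) = (a : ℂ) • Tinv (T z) := by
      rw [hBdef]
      simp only [ContinuousLinearMap.smul_apply, map_smul, e1, smul_sub, smul_smul]
      rfl
    have e3 : 0 ≤ (inner ℂ (B y - B (B y)) y : ℂ).re := by
      rw [e2]
      have : (inner ℂ ((a : ℂ) • Tinv (T z)) y : ℂ) = (a : ℂ) * inner ℂ (T z) z := by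
        rw [inner_smul_left, Complex.conj_ofReal, hsinv, hz]
      rw [this]
      have := hpos z
      rw [Complex.mul_re]
      simp only [Complex.ofReal_re, Complex.ofReal_im, zero_mul, sub_zero]
      positivity
    have e4 : (inner ℂ (B (B y)) y : ℂ) = inner ℂ (B y) (B y) := hsB (B y) y
    have e5 : (inner ℂ (B y - B (B y)) y : ℂ)
        = inner ℂ (B y) y - (inner ℂ (B y) (B y) : ℂ) := by
      rw [inner_sub_left, e4]
    rw [e5] at e3
    have e6 : (inner ℂ (B y) (B y) : ℂ).re = ‖B y‖ ^ 2 := by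
      simpa using inner_self_eq_norm_sq (𝕜 := ℂ) (B y)
    rw [Complex.sub_re, e6] at e3
    linarith
  -- re ⟪B y, y⟫ ≤ ‖B y‖ * ‖y‖
  have hCS : ∀ y : H, (inner ℂ (B y) y : ℂ).re ≤ ‖B y‖ * ‖y‖ := by
    intro y
    have := norm_inner_le_norm (𝕜 := ℂ) (B y) y
    calc (inner ℂ (B y) y : ℂ).re ≤ ‖(inner ℂ (B y) y : ℂ)‖ := by
          simpa using RCLike.re_le_norm (K := ℂ) (inner ℂ (B y) y)
      _ ≤ ‖B y‖ * ‖y‖ := this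
  -- contraction
  have hcontr : ∀ y : H, ‖B y‖ ≤ ‖y‖ := by
    intro y
    have h1 := hBB y
    have h2 := hCS y
    nlinarith [norm_nonneg (B y), norm_nonneg y]
  -- L4 : ‖y - B y‖^2 ≤ ‖y‖^2 - ‖B y‖^2
  have hA : ∀ y : H, ‖y - B y‖ ^ 2 ≤ ‖y‖ ^ 2 - ‖B y‖ ^ 2 := by
    intro y
    have e := @norm_sub_sq ℂ _ _ _ _ y (B y)
    have hre : (inner ℂ y (B y) : ℂ).re = (inner ℂ (B y) y : ℂ).re := by
      rw [← inner_conj_symm y (B y), Complex.conj_re]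
    simp only [RCLike.re_to_complex] at e
    rw [hre] at e
    linarith [e, hBB y]
  -- powers are contractions
  have hpowA : ∀ (n : ℕ) (x : H), ‖(B ^ n) x‖ ≤ ‖x‖ := by
    intro n
    induction n with
    | zero => intro x; simp
    | succ n ih =>
      intro x
      have : (B ^ (n + 1)) x = (B ^ n) (B x) := by
        rw [pow_succ]; rfl
      rw [this]
      exact le_trans (ih (B x)) (hcontr x)
  -- kernel inclusion
  have hkerA : ∀ u : H, u - B u = 0 → T u = 0 := by
    intro u hu
    have hBu : B u = u := by
      have := sub_eq_zero.mp hu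
      exact this.symm
    have hav : (a : ℂ) • Tinv u = u := by
      rw [hBdef] at hBu
      simpa using hBu
    have h4 : T u + (a : ℂ) • u = (a : ℂ) • u := by
      conv_lhs => rw [← hav]
      rw [map_smul, ← smul_add, h₂' u]
    have h5 : T u + (a : ℂ) • u = 0 + (a : ℂ) • u := by rw [h4, zero_add]
    exact add_right_cancel h5
  -- the operator A = 1 - B
  set Aop : H →L[ℂ] H := 1 - B with hAop
  have hAapp : ∀ y : H, Aop y = y - B y := by
    intro y; simp [hAop]
  have hsA : ∀ x y : H, (inner ℂ (Aop x) y : ℂ) = inner ℂ x (Aop y) := by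
    intro x y
    rw [hAapp, hAapp, inner_sub_left, inner_sub_right, hsB]
  -- w is in the closure of the range of Aop
  have hwcl : w ∈ closure ((LinearMap.range (Aop : H →ₗ[ℂ] H) : Submodule ℂ H) : Set H) := by
    have key : w ∈ (LinearMap.range (Aop : H →ₗ[ℂ] H) : Submodule ℂ H)ᗮᗮ := by
      rw [Submodule.mem_orthogonal]
      intro u hu
      have hAu : Aop u = 0 := by
        have h6 : (inner ℂ (Aop (Aop u)) u : ℂ) = 0 := by
          rw [Submodule.mem_orthogonal] at hu
          exact hu (Aop (Aop u)) ⟨Aop u, rfl⟩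
        rw [hsA] at h6
        exact inner_self_eq_zero.mp h6
      have hTu : T u = 0 := hkerA u (by rw [← hAapp]; exact hAu)
      exact hw u hTu
    rw [← Submodule.topologicalClosure_coe, ← Submodule.orthogonal_orthogonal_eq_closure]
    exact key
  -- for each v, ‖Bⁿ (Aop v)‖ → 0
  have hAv : ∀ v : H, Tendsto (fun n : ℕ => ‖(B ^ n) (Aop v)‖) atTop (𝓝 0) := by
    intro v
    set s : ℕ → ℝ := fun n => ‖(B ^ n) v‖ ^ 2 with hsdef
    have hanti : Antitone s := by
      apply antitone_nat_of_succ_le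
      intro n
      have h8 : (B ^ (n + 1)) v = B ((B ^ n) v) := by
        rw [pow_succ']; rfl
      have := hcontr ((B ^ n) v)
      simp only [hsdef, h8]
      exact pow_le_pow_left₀ (norm_nonneg _) this 2
    have hbdd : BddBelow (Set.range s) := by
      refine ⟨0, ?_⟩
      rintro x ⟨n, rfl⟩
      positivity
    have hconv : Tendsto s atTop (𝓝 (⨅ n, s n)) := tendsto_atTop_ciInf hanti hbdd
    have hdiff : Tendsto (fun n => s n - s (n + 1)) atTop (𝓝 0) := by
      have h9 : Tendsto (fun n => s (n + 1)) atTop (𝓝 (⨅ n, s n)) :=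
        hconv.comp (tendsto_add_atTop_nat 1)
      have := hconv.sub h9
      simpa using this
    have hbound : ∀ n : ℕ, ‖(B ^ n) (Aop v)‖ ^ 2 ≤ s n - s (n + 1) := by
      intro n
      have hcomm : (B ^ n) (Aop v) = (B ^ n) v - B ((B ^ n) v) := by
        rw [hAapp, map_sub]
        congr 1
        have : (B ^ n) (B v) = (B ^ n * B) v := rfl
        rw [this, ← pow_succ, pow_succ']
        rfl
      have h10 : (B ^ (n + 1)) v = B ((B ^ n) v) := by rw [pow_succ']; rfl
      rw [hcomm]
      have := hA ((B ^ n) v)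
      simp only [hsdef, h10]
      linarith
    have hsq : Tendsto (fun n : ℕ => ‖(B ^ n) (Aop v)‖ ^ 2) atTop (𝓝 0) := by
      apply squeeze_zero (fun n => by positivity) hbound hdiff
    have hnorm : (fun n : ℕ => ‖(B ^ n) (Aop v)‖)
        = fun n => Real.sqrt (‖(B ^ n) (Aop v)‖ ^ 2) := by
      funext n; rw [Real.sqrt_sq (norm_nonneg _)]
    rw [hnorm]
    simpa using hsq.sqrt
  -- final ε/2 argument
  rw [Metric.tendsto_atTop]
  intro ε hε
  rw [Metric.mem_closure_iff] at hwcl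
  obtain ⟨b, hbS, hbd⟩ := hwcl (ε / 2) (by positivity)
  obtain ⟨v, rfl⟩ := hbS
  rw [dist_eq_norm] at hbd
  have h11 := (hAv v).eventually (eventually_lt_nhds (show (0:ℝ) < ε / 2 by positivity))
  rw [eventually_atTop] at h11
  obtain ⟨N, hN⟩ := h11
  refine ⟨N, fun n hn => ?_⟩
  rw [Real.dist_eq, sub_zero, abs_of_nonneg (norm_nonneg _)]
  have step : ‖(B ^ n) w‖ ≤ ‖(B ^ n) (w - Aop v)‖ + ‖(B ^ n) (Aop v)‖ := by
    calc ‖(B ^ n) w‖ = ‖(B ^ n) (w - Aop v) + (B ^ n) (Aop v)‖ := by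
          rw [← map_add, sub_add_cancel]
      _ ≤ ‖(B ^ n) (w - Aop v)‖ + ‖(B ^ n) (Aop v)‖ := norm_add_le _ _
  have h12 : ‖(B ^ n) (w - Aop v)‖ ≤ ‖w - Aop v‖ := hpowA n _
  have h13 := hN n hn
  calc ‖(B ^ n) w‖ ≤ ‖(B ^ n) (w - Aop v)‖ + ‖(B ^ n) (Aop v)‖ := step
    _ < ε / 2 + ε / 2 := by
        apply add_lt_add_of_le_of_lt (le_trans h12 (le_of_lt hbd)) h13
    _ = ε := by ring
end

section
/- Let A be a bounded operator on H, T = A*A, a > 0, B = a(T+aI)^{-1}, f = Ay with y ⊥ N(A). Define the iteration u_{n+1} = B u_n + (T+aI)^{-1} A* f with u_1 ⊥ N(A). Then lim_{n→∞} ‖u_n − y‖ = 0. -/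
open ContinuousLinearMap Filter Topology

/-- Iterative process `u_{n+1} = B u_n + (T+aI)⁻¹ A* f`, `B = a(T+aI)⁻¹`, `u₁ ⊥ N(A)`,
`f = Ay`, `y ⊥ N(A)`: then `‖u_n − y‖ → 0`. -/
theorem iteration_converges
    {H : Type*} [NormedAddCommGroup H] [InnerProductSpace ℂ H] [CompleteSpace H]
    (A : H →L[ℂ] H) (T : H →L[ℂ] H) (hT : T = (adjoint A) ∘L A)
    (a : ℝ) (ha : 0 < a)
    (Tinv : H →L[ℂ] H)
    (h₁ : Tinv ∘L (T + (a : ℂ) • 1) = 1) (h₂ : (T + (a : ℂ) • 1) ∘L Tinv = 1)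
    (B : H →L[ℂ] H) (hBdef : B = (a : ℂ) • Tinv)
    (y f : H) (hf : f = A y)
    (hy : ∀ v : H, A v = 0 → (inner ℂ v y : ℂ) = 0)
    (u : ℕ → H)
    (hu1 : ∀ v : H, A v = 0 → (inner ℂ v (u 1) : ℂ) = 0)
    (hrec : ∀ n : ℕ, 1 ≤ n → u (n + 1) = B (u n) + Tinv ((adjoint A) f)) :
    Tendsto (fun n : ℕ => ‖u n - y‖) atTop (𝓝 0) := by
  have hinv1 : ∀ x : H, Tinv (T x) + (a : ℂ) • Tinv x = x := by
    intro x
    have := congrArg (fun F : H →L[ℂ] H => F x) h₁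
    simpa [ContinuousLinearMap.comp_apply, map_add, map_smul] using this
  have hinv2 : ∀ x : H, T (Tinv x) + (a : ℂ) • Tinv x = x := by
    intro x
    have := congrArg (fun F : H →L[ℂ] H => F x) h₂
    simpa [ContinuousLinearMap.comp_apply, map_add] using this
  have hTsa : adjoint T = T := by
    rw [hT, adjoint_comp, adjoint_adjoint]
  have hSsa : adjoint (T + (a : ℂ) • 1) = T + (a : ℂ) • 1 := by
    rw [← star_eq_adjoint, star_add, star_smul, star_one, star_eq_adjoint, hTsa]
    norm_num [Complex.star_def, Complex.conj_ofReal]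
  have hadj1 : adjoint (1 : H →L[ℂ] H) = 1 := by
    rw [← star_eq_adjoint, star_one]
  have hTinvsa : adjoint Tinv = Tinv := by
    have h₁' : (T + (a : ℂ) • 1) ∘L adjoint Tinv = 1 := by
      have h0 := congrArg adjoint h₁
      rwa [adjoint_comp, hSsa, hadj1] at h0
    calc adjoint Tinv = (Tinv ∘L (T + (a : ℂ) • 1)) ∘L adjoint Tinv := by
          rw [h₁, ContinuousLinearMap.one_def, ContinuousLinearMap.id_comp]
      _ = Tinv ∘L ((T + (a : ℂ) • 1) ∘L adjoint Tinv) := by rw [ContinuousLinearMap.comp_assoc]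
      _ = Tinv := by rw [h₁', ContinuousLinearMap.one_def, ContinuousLinearMap.comp_id]
  have hTinv_move : ∀ x w : H, (inner ℂ (Tinv x) w : ℂ) = inner ℂ x (Tinv w) := by
    intro x w
    conv_lhs => rw [← hTinvsa]
    exact adjoint_inner_left Tinv w x
  have hB_move : ∀ x w : H, (inner ℂ (B x) w : ℂ) = inner ℂ x (B w) := by
    intro x w
    rw [hBdef]
    simp only [ContinuousLinearMap.smul_apply, inner_smul_left, inner_smul_right,
      Complex.star_def, Complex.conj_ofReal, hTinv_move]
  have hBpow_succ : ∀ (n : ℕ) (x : H), (B ^ (n + 1)) x = (B ^ n) (B x) := by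
    intro n x; rw [pow_succ]; rfl
  have hBpow_succ' : ∀ (n : ℕ) (x : H), (B ^ (n + 1)) x = B ((B ^ n) x) := by
    intro n x; rw [pow_succ']; rfl
  have hBpow_move : ∀ (n : ℕ) (x w : H), (inner ℂ ((B ^ n) x) w : ℂ) = inner ℂ x ((B ^ n) w) := by
    intro n
    induction n with
    | zero => simp
    | succ k ih =>
      intro x w
      rw [hBpow_succ k x, ih (B x) w, hB_move, ← hBpow_succ' k w]
  have hBpow_add : ∀ (n m : ℕ) (x : H), (B ^ (n + m)) x = (B ^ n) ((B ^ m) x) := by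
    intro n m x; rw [pow_add]; rfl
  have hT_re : ∀ x : H, (inner ℂ (T x) x : ℂ) = (‖A x‖ ^ 2 : ℝ) := by
    intro x
    rw [hT]
    simp only [ContinuousLinearMap.comp_apply]
    rw [adjoint_inner_left, inner_self_eq_norm_sq_to_K]
    norm_num
  have key0 : ∀ w : H, w = T (Tinv w) + (a : ℂ) • Tinv w := fun w => (hinv2 w).symm
  have hBw : ∀ w : H, B w = (a : ℂ) • Tinv w := by
    intro w; rw [hBdef]; rfl
  -- quadratic form computations
  have hq1 : ∀ p : H, RCLike.re (inner ℂ (T p) (T p + (a : ℂ) • p) : ℂ)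
      = ‖T p‖ ^ 2 + a * ‖A p‖ ^ 2 := by
    intro p
    rw [inner_add_right, inner_smul_right, map_add]
    have h1 : (inner ℂ (T p) (T p) : ℂ) = ((‖T p‖ ^ 2 : ℝ) : ℂ) := by
      rw [inner_self_eq_norm_sq_to_K]; norm_num
    rw [h1, hT_re]
    norm_num [← Complex.ofReal_pow]
  have hsub : ∀ w : H, w - B w = T (Tinv w) := by
    intro w
    rw [hBw w]
    nth_rewrite 1 [key0 w]
    abel
  have L1 : ∀ w : H, 0 ≤ RCLike.re (inner ℂ (w - B w) w : ℂ) := by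
    intro w
    rw [hsub w]
    nth_rewrite 2 [key0 w]
    rw [hq1]
    exact add_nonneg (sq_nonneg _) (mul_nonneg ha.le (sq_nonneg _))
  have L2 : ∀ w : H, 0 ≤ RCLike.re (inner ℂ (B w - B (B w)) w : ℂ) := by
    intro w
    have hwp : B w - B (B w) = (a : ℂ) • Tinv (T (Tinv w)) := by
      rw [← map_sub, hsub w, hBw]
    rw [hwp, inner_smul_left, hTinv_move, hT_re, Complex.conj_ofReal,
      ← Complex.ofReal_mul]
    simpa [← Complex.ofReal_pow] using mul_nonneg ha.le (sq_nonneg ‖A (Tinv w)‖)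
  have L3 : ∀ w : H, 0 ≤ RCLike.re (inner ℂ (B w) w : ℂ) := by
    intro w
    rw [hBw w, inner_smul_left]
    nth_rewrite 2 [key0 w]
    rw [inner_add_right, inner_smul_right]
    have h2 : (inner ℂ (Tinv w) (T (Tinv w)) : ℂ) = ((‖A (Tinv w)‖ ^ 2 : ℝ) : ℂ) := by
      rw [← inner_conj_symm, hT_re]
      simp [Complex.conj_ofReal]
    have h4 : (inner ℂ (Tinv w) (Tinv w) : ℂ) = ((‖Tinv w‖ ^ 2 : ℝ) : ℂ) := by
      rw [inner_self_eq_norm_sq_to_K]; norm_num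
    rw [h2, h4, Complex.conj_ofReal, ← Complex.ofReal_mul, ← Complex.ofReal_add,
      ← Complex.ofReal_mul]
    simpa [← Complex.ofReal_pow] using mul_nonneg ha.le (add_nonneg (sq_nonneg ‖A (Tinv w)‖)
      (mul_nonneg ha.le (sq_nonneg ‖Tinv w‖)))
  -- sequences
  set v : H := u 1 - y with hv
  set g : ℕ → H := fun n => (B ^ n) v with hg
  set c : ℕ → ℝ := fun n => RCLike.re (inner ℂ (g n) v : ℂ) with hc
  have hc_even : ∀ n : ℕ, c (2 * n) = ‖g n‖ ^ 2 := by
    intro n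
    have e : 2 * n = n + n := by omega
    simp only [hc, hg, e]
    rw [hBpow_add n n v, hBpow_move n ((B ^ n) v) v, inner_self_eq_norm_sq_to_K]
    simp [← Complex.ofReal_pow, RCLike.ofReal_re]
  have hc_addm : ∀ n m : ℕ, RCLike.re (inner ℂ (g n) (g m) : ℂ) = c (n + m) := by
    intro n m
    simp only [hc, hg]
    rw [hBpow_move n v ((B ^ m) v), ← hBpow_add n m v, inner_re_symm]
  have hc_diff : ∀ k : ℕ, ∀ x : H, g k - g (k + 1) = x → c k - c (k + 1)
      = RCLike.re (inner ℂ x v : ℂ) := by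
    intro k x hx
    simp only [hc]
    rw [← map_sub, ← inner_sub_left, hx]
  have hc_anti : ∀ k : ℕ, c (k + 1) ≤ c k := by
    intro k
    rcases Nat.even_or_odd k with ⟨j, hj⟩ | ⟨j, hj⟩
    · subst hj
      have hsplit : g (j + j) - g (j + j + 1) = (B ^ j) (g j - B (g j)) := by
        have e1 : j + j + 1 = j + (j + 1) := by omega
        simp only [hg, e1]
        rw [hBpow_add j j v, hBpow_add j (j + 1) v, hBpow_succ' j v, ← map_sub]
      have heq := hc_diff (j + j) _ hsplit
      rw [hBpow_move j (g j - B (g j)) v] at heq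
      have : ((B ^ j) v) = g j := rfl
      rw [this] at heq
      linarith [L1 (g j), heq]
    · subst hj
      have hsplit : g (2 * j + 1) - g (2 * j + 1 + 1) = (B ^ j) (B (g j) - B (B (g j))) := by
        have e1 : 2 * j + 1 = j + (j + 1) := by omega
        have e2 : 2 * j + 1 + 1 = j + (j + 1 + 1) := by omega
        simp only [hg]
        rw [e2, e1]
        rw [hBpow_add j (j + 1) v, hBpow_add j (j + 1 + 1) v, hBpow_succ' (j + 1) v,
          hBpow_succ' j v, ← map_sub]
      have heq := hc_diff (2 * j + 1) _ hsplit
      rw [hBpow_move j (B (g j) - B (B (g j))) v] at heq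
      have : ((B ^ j) v) = g j := rfl
      rw [this] at heq
      linarith [L2 (g j), heq]
  have hc_nonneg : ∀ k : ℕ, 0 ≤ c k := by
    intro k
    rcases Nat.even_or_odd k with ⟨j, hj⟩ | ⟨j, hj⟩
    · subst hj
      have e : j + j = 2 * j := by omega
      rw [e, hc_even]
      positivity
    · subst hj
      have hsplit : g (2 * j + 1) = (B ^ j) (B (g j)) := by
        have e1 : 2 * j + 1 = j + (j + 1) := by omega
        simp only [hg, e1]
        rw [hBpow_add j (j + 1) v, hBpow_succ' j v]
      have heq : c (2 * j + 1) = RCLike.re (inner ℂ (B (g j)) (g j) : ℂ) := by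
        simp only [hc]
        rw [hsplit, hBpow_move j (B (g j)) v]
      rw [heq]
      exact L3 (g j)
  have hc_antitone : Antitone c := antitone_nat_of_succ_le hc_anti
  have hc_bdd : BddBelow (Set.range c) := ⟨0, by rintro x ⟨k, rfl⟩; exact hc_nonneg k⟩
  have hc_cauchy : CauchySeq c := (tendsto_atTop_ciInf hc_antitone hc_bdd).cauchySeq
  have hnorm_sq : ∀ n m : ℕ, ‖g n - g m‖ ^ 2 = c (2 * n) - 2 * c (n + m) + c (2 * m) := by
    intro n m
    rw [norm_sub_sq (𝕜 := ℂ), hc_even, hc_even, hc_addm]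
  have hg_cauchy : CauchySeq g := by
    rw [Metric.cauchySeq_iff]
    intro ε hε
    obtain ⟨N, hN⟩ := Metric.cauchySeq_iff.mp hc_cauchy (ε ^ 2 / 2) (by positivity)
    refine ⟨N, fun n hn m hm => ?_⟩
    have h1 := hN (2 * n) (by omega) (n + m) (by omega)
    have h2 := hN (2 * m) (by omega) (n + m) (by omega)
    rw [Real.dist_eq] at h1 h2
    have hsq : ‖g n - g m‖ ^ 2 < ε ^ 2 := by
      rw [hnorm_sq]
      have e1 : c (2 * n) - c (n + m) < ε ^ 2 / 2 := lt_of_le_of_lt (le_abs_self _) h1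
      have e2 : c (2 * m) - c (n + m) < ε ^ 2 / 2 := lt_of_le_of_lt (le_abs_self _) h2
      linarith
    rw [dist_eq_norm]
    exact lt_of_pow_lt_pow_left₀ 2 (le_of_lt hε) hsq
  obtain ⟨z, hz⟩ := cauchySeq_tendsto_of_complete hg_cauchy
  have hBz : B z = z := by
    have h1 : Tendsto (fun n => g (n + 1)) atTop (𝓝 z) := hz.comp (tendsto_add_atTop_nat 1)
    have h2 : Tendsto (fun n => B (g n)) atTop (𝓝 (B z)) := (B.continuous.tendsto z).comp hz
    have h3 : (fun n => g (n + 1)) = fun n => B (g n) := by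
      funext n
      simp only [hg]
      exact hBpow_succ' n v
    rw [h3] at h1
    exact tendsto_nhds_unique h2 h1
  have hAz : A z = 0 := by
    have hz2 : (a : ℂ) • Tinv z = z := by rw [← hBw, hBz]
    have hTp : T (Tinv z) = 0 := by
      have h := hinv2 z
      rw [hz2] at h
      exact add_eq_right.mp h
    have hAp : A (Tinv z) = 0 := by
      have h5 : (inner ℂ (T (Tinv z)) (Tinv z) : ℂ) = 0 := by rw [hTp]; simp
      rw [hT_re] at h5
      have h6 : ‖A (Tinv z)‖ ^ 2 = 0 := by exact_mod_cast h5
      have h7 : ‖A (Tinv z)‖ = 0 := by nlinarith [norm_nonneg (A (Tinv z))]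
      exact norm_eq_zero.mp h7
    rw [← hz2, map_smul, hAp, smul_zero]
  have hzv : (inner ℂ z v : ℂ) = 0 := by
    simp only [hv, inner_sub_right]
    rw [hu1 z hAz, hy z hAz, sub_zero]
  have hBnz : ∀ n : ℕ, (B ^ n) z = z := by
    intro n
    induction n with
    | zero => simp
    | succ k ih => rw [hBpow_succ' k z, ih, hBz]
  have hzg : ∀ n : ℕ, (inner ℂ z (g n) : ℂ) = 0 := by
    intro n
    simp only [hg]
    rw [← hBpow_move n z v, hBnz, hzv]
  have hz0 : z = 0 := by
    have h1 : Tendsto (fun n => (inner ℂ z (g n) : ℂ)) atTop (𝓝 (inner ℂ z z)) :=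
      Tendsto.inner tendsto_const_nhds hz
    have h2 : (fun n => (inner ℂ z (g n) : ℂ)) = fun _ => (0 : ℂ) := funext hzg
    rw [h2] at h1
    have h3 : (inner ℂ z z : ℂ) = 0 := tendsto_nhds_unique h1 tendsto_const_nhds
    exact inner_self_eq_zero.mp h3
  rw [hz0] at hz
  have hfix : Tinv ((adjoint A) f) = y - B y := by
    have hTy : (adjoint A) (A y) = T y := by rw [hT]; rfl
    rw [hf, hTy, hBw]
    have h9 := hinv1 y
    have h10 : Tinv (T y) = y - (a : ℂ) • Tinv y := by
      rw [eq_sub_iff_add_eq]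
      exact h9
    rw [h10]
  have huk : ∀ k : ℕ, u (k + 1) - y = g k := by
    intro k
    induction k with
    | zero => simp [hg, hv]
    | succ k ih =>
      rw [hrec (k + 1) (by omega), hfix]
      have h8 : B (u (k + 1)) + (y - B y) - y = B (u (k + 1) - y) := by
        rw [map_sub]; abel
      rw [h8, ih]
      simp only [hg]
      rw [hBpow_succ' k v]
  have hnorm : Tendsto (fun n : ℕ => ‖g n‖) atTop (𝓝 0) := by
    have h6 := hz.norm
    rwa [norm_zero] at h6
  have h5 : (fun n : ℕ => ‖u (n + 1) - y‖) = fun n => ‖g n‖ :=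
    funext fun n => by rw [huk n]
  rw [← tendsto_add_atTop_iff_nat 1]
  exact h5 ▸ hnorm
end

section
/- Let A be a bounded operator on H with range R(A) dense, f ∈ R(A), ‖f_δ − f‖ ≤ δ, ‖f_δ‖ > Cδ with 1 < C < 2, Q = AA*. Define h(a,δ)² = ‖(Q(Q+aI)^{-1} − I) f_δ‖². Then h(a,δ) is continuous and monotone increasing in a > 0, lim_{a→∞} h(a,δ) = ‖f_δ‖ > Cδ, and lim_{a→0+} h(a,δ) = ‖P_{N(A*)} f_δ‖ ≤ δ < Cδ; hence the equation h(a,δ) = Cδ has a unique solution a(δ) > 0. -/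
open ContinuousLinearMap Filter Topology

private lemma aux_expand {H : Type*} [NormedAddCommGroup H] [InnerProductSpace ℂ H]
    (u s : H) (a : ℝ) :
    ‖(a : ℂ) • u + s‖ ^ 2
      = a ^ 2 * ‖u‖ ^ 2 + 2 * a * ((inner ℂ u s : ℂ)).re + ‖s‖ ^ 2 := by
  rw [@norm_add_sq ℂ, inner_smul_left]
  simp only [norm_smul, Complex.norm_real, Complex.conj_ofReal, RCLike.re_to_complex,
    Complex.re_ofReal_mul, mul_pow, sq_abs, Real.norm_eq_abs]
  ring

set_option maxHeartbeats 1000000 in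
/-- The discrepancy function `h(a,δ) = ‖(Q(Q+aI)⁻¹ − I) f_δ‖` is continuous and monotone
increasing in `a > 0`, tends to `‖f_δ‖ > Cδ` as `a → ∞` and to `‖P_{N(A*)} f_δ‖ ≤ δ < Cδ`
as `a → 0⁺`; hence `h(a,δ) = Cδ` has a unique solution `a(δ) > 0`. -/
theorem discrepancy_equation_unique_solution
    {H : Type*} [NormedAddCommGroup H] [InnerProductSpace ℂ H] [CompleteSpace H]
    (A : H →L[ℂ] H) (hdense : DenseRange A)
    (Q : H →L[ℂ] H) (hQ : Q = A ∘L adjoint A)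
    (y f fδ : H) (hf : f = A y)
    (δ : ℝ) (hδ : 0 < δ) (hnoise : ‖fδ - f‖ ≤ δ)
    (C : ℝ) (hC : 1 < C ∧ C < 2) (hfδ : C * δ < ‖fδ‖)
    (P : H →L[ℂ] H)
    (hP : ∀ x : H, (adjoint A) (P x) = 0 ∧
      ∀ v : H, (adjoint A) v = 0 → (inner ℂ v (x - P x) : ℂ) = 0)
    (Cinv : ℝ → H →L[ℂ] H)
    (hCinv : ∀ a : ℝ, 0 < a →
      Cinv a ∘L (Q + (a : ℂ) • 1) = 1 ∧ (Q + (a : ℂ) • 1) ∘L Cinv a = 1)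
    (h : ℝ → ℝ)
    (hh : ∀ a : ℝ, 0 < a → h a = ‖(Q ∘L Cinv a - 1) fδ‖) :
    ContinuousOn h (Set.Ioi 0) ∧
    MonotoneOn h (Set.Ioi 0) ∧
    Tendsto h atTop (𝓝 ‖fδ‖) ∧
    Tendsto h (𝓝[>] 0) (𝓝 ‖P fδ‖) ∧
    ‖P fδ‖ ≤ δ ∧ δ < C * δ ∧
    ∃! a : ℝ, 0 < a ∧ h a = C * δ := by
  obtain ⟨hC1, hC2⟩ := hC
  have hCδ : 0 < C * δ := by nlinarith
  have hδC : δ < C * δ := by nlinarith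
  have hfδ0 : fδ ≠ 0 := by
    intro h0; rw [h0, norm_zero] at hfδ; linarith
  -- the adjoint has trivial kernel, since A has dense range
  have hker : ∀ u : H, adjoint A u = 0 → u = 0 := by
    intro u hu
    have h1 : ∀ z : H, (inner ℂ u (A z) : ℂ) = 0 := by
      intro z
      rw [← ContinuousLinearMap.adjoint_inner_left A z u, hu, inner_zero_left]
    have h2 : Set.EqOn (fun z : H => (inner ℂ u z : ℂ)) (fun _ => (0 : ℂ)) (Set.range A) := by
      rintro _ ⟨z, rfl⟩; exact h1 z
    have h3 := h2.closure (continuous_const.inner continuous_id) continuous_const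
    have h4 : (inner ℂ u u : ℂ) = 0 := h3 (hdense u)
    exact inner_self_eq_zero.mp h4
  have hPfδ : P fδ = 0 := hker _ (hP fδ).1
  -- inner products with Q
  have hQsa : ∀ x : H, (inner ℂ (Q x) x : ℂ) = (inner ℂ (adjoint A x) (adjoint A x) : ℂ) := by
    intro x
    rw [hQ]
    exact (ContinuousLinearMap.adjoint_inner_right A (adjoint A x) x).symm
  have hQpos : ∀ x : H, 0 ≤ ((inner ℂ (Q x) x : ℂ)).re := by
    intro x
    rw [hQsa]
    have := @inner_self_nonneg ℂ H _ _ _ (adjoint A x)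
    simpa using this
  -- inverse application
  have hinv1 : ∀ a : ℝ, 0 < a → ∀ x : H, (Q + (a : ℂ) • 1) (Cinv a x) = x := by
    intro a ha x
    have := DFunLike.congr_fun (hCinv a ha).2 x
    simpa using this
  have hinv2 : ∀ a : ℝ, 0 < a → ∀ x : H, Cinv a ((Q + (a : ℂ) • 1) x) = x := by
    intro a ha x
    have := DFunLike.congr_fun (hCinv a ha).1 x
    simpa using this
  -- basic norm bound ‖a • Cinv a x‖ ≤ ‖x‖
  have hbound : ∀ a : ℝ, 0 < a → ∀ x : H, a * ‖Cinv a x‖ ≤ ‖x‖ := by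
    intro a ha x
    set u := Cinv a x with hu
    have hx : Q u + (a : ℂ) • u = x := by
      have := hinv1 a ha x
      simpa [add_apply, smul_apply, ContinuousLinearMap.one_def, ContinuousLinearMap.id_apply] using this
    have hnu : ((inner ℂ u u : ℂ)).re = ‖u‖ ^ 2 := by
      have := @inner_self_eq_norm_sq ℂ H _ _ _ u
      simpa using this
    have h5 : ((inner ℂ x u : ℂ)).re = ((inner ℂ (Q u) u : ℂ)).re + a * ‖u‖ ^ 2 := by
      rw [← hx, inner_add_left, inner_smul_left, Complex.conj_ofReal, Complex.add_re,
        Complex.re_ofReal_mul, hnu]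
    have h6 : a * ‖u‖ ^ 2 ≤ ((inner ℂ x u : ℂ)).re := by
      have := hQpos u; linarith
    have h7 : ((inner ℂ x u : ℂ)).re ≤ ‖x‖ * ‖u‖ := by
      calc ((inner ℂ x u : ℂ)).re ≤ ‖(inner ℂ x u : ℂ)‖ := Complex.re_le_norm _
        _ ≤ ‖x‖ * ‖u‖ := norm_inner_le_norm x u
    rcases eq_or_ne u 0 with h0 | h0
    · simp [h0]
    · have hn : 0 < ‖u‖ := norm_pos_iff.mpr h0
      have : a * ‖u‖ * ‖u‖ ≤ ‖x‖ * ‖u‖ := by nlinarith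
      exact le_of_mul_le_mul_right this hn
  -- alternative formula for h
  have haf : ∀ a : ℝ, 0 < a → (Q ∘L Cinv a - 1) fδ = -((a : ℂ) • Cinv a fδ) := by
    intro a ha
    have h1 := hinv1 a ha fδ
    simp only [add_apply, smul_apply, ContinuousLinearMap.one_def, ContinuousLinearMap.id_apply] at h1
    simp only [sub_apply, comp_apply, ContinuousLinearMap.one_def, ContinuousLinearMap.id_apply]
    rw [eq_neg_iff_add_eq_zero, sub_add_eq_add_sub, h1, sub_self]
  have hval : ∀ a : ℝ, 0 < a → h a = a * ‖Cinv a fδ‖ := by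
    intro a ha
    rw [hh a ha, haf a ha, norm_neg, norm_smul, Complex.norm_real,
      Real.norm_eq_abs, abs_of_pos ha]
  have hvalnn : ∀ a : ℝ, 0 < a → 0 ≤ h a := by
    intro a ha; rw [hval a ha]; positivity
  -- resolvent identity
  have hres : ∀ a b : ℝ, 0 < a → 0 < b →
      Cinv a fδ - Cinv b fδ = ((b : ℂ) - a) • Cinv a (Cinv b fδ) := by
    intro a b ha hb
    set v := Cinv b fδ with hv
    have e2 : (Q + (b : ℂ) • 1) v = fδ := hinv1 b hb fδ
    have e3 : fδ = (Q + (a : ℂ) • 1) v + ((b : ℂ) - a) • v := by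
      rw [← e2]
      simp only [add_apply, smul_apply, ContinuousLinearMap.one_def, ContinuousLinearMap.id_apply, sub_smul]
      module
    have : Cinv a fδ = v + ((b : ℂ) - a) • Cinv a v := by
      rw [e3, map_add, map_smul, hinv2 a ha v]
    rw [this]; module
  have hlip : ∀ a b : ℝ, 0 < a → 0 < b →
      a * b * ‖Cinv a fδ - Cinv b fδ‖ ≤ |b - a| * ‖fδ‖ := by
    intro a b ha hb
    rw [hres a b ha hb, norm_smul]
    have h1 : ‖((b : ℂ) - a)‖ = |b - a| := by
      rw [← Complex.ofReal_sub, Complex.norm_real, Real.norm_eq_abs]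
    rw [h1]
    have b1 := hbound a ha (Cinv b fδ)
    have b2 := hbound b hb fδ
    have habs : 0 ≤ |b - a| := abs_nonneg _
    have hn1 : 0 ≤ ‖Cinv a (Cinv b fδ)‖ := norm_nonneg _
    have hn2 : 0 ≤ ‖Cinv b fδ‖ := norm_nonneg _
    have c1 : a * b * ‖Cinv a (Cinv b fδ)‖ ≤ ‖fδ‖ := by nlinarith
    calc a * b * (|b - a| * ‖Cinv a (Cinv b fδ)‖)
        = |b - a| * (a * b * ‖Cinv a (Cinv b fδ)‖) := by ring
      _ ≤ |b - a| * ‖fδ‖ := mul_le_mul_of_nonneg_left c1 habs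
  -- continuity of a ↦ Cinv a fδ on (0, ∞)
  have hkc : ContinuousOn (fun a : ℝ => Cinv a fδ) (Set.Ioi 0) := by
    rw [Metric.continuousOn_iff]
    intro a ha ε hε
    have ha0 : (0 : ℝ) < a := ha
    set δ' := min (a / 2) (ε * a * a / (2 * (‖fδ‖ + 1))) with hδ'
    have hδ'pos : 0 < δ' := by
      apply lt_min (by linarith)
      have : 0 < ‖fδ‖ + 1 := by positivity
      positivity
    refine ⟨δ', hδ'pos, ?_⟩
    intro b hb hd
    have hb0 : (0 : ℝ) < b := hb
    rw [Real.dist_eq] at hd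
    have hba : |b - a| < δ' := hd
    have hb2 : a / 2 < b := by
      have h1 : |b - a| < a / 2 := lt_of_lt_of_le hba (min_le_left _ _)
      have := abs_lt.mp h1
      linarith [this.1]
    rw [dist_eq_norm]
    set D := ‖Cinv b fδ - Cinv a fδ‖ with hD
    have hD0 : 0 ≤ D := norm_nonneg _
    have hl := hlip b a hb0 ha0
    rw [← hD] at hl
    by_contra hcon
    push_neg at hcon
    have hδ'2 : δ' ≤ ε * a * a / (2 * (‖fδ‖ + 1)) := min_le_right _ _
    have hF : 0 ≤ ‖fδ‖ := norm_nonneg _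
    have hδ'3 : δ' * (‖fδ‖ + 1) ≤ ε * a * a / 2 := by
      rw [le_div_iff₀ (by positivity)] at hδ'2
      nlinarith
    have h9 : |a - b| = |b - a| := abs_sub_comm a b
    have k1 : b * a * D ≤ ε * a * a / 2 := by
      calc b * a * D ≤ |a - b| * ‖fδ‖ := hl
        _ ≤ |b - a| * (‖fδ‖ + 1) := by
            rw [h9]
            have := abs_nonneg (b - a)
            nlinarith
        _ ≤ δ' * (‖fδ‖ + 1) := mul_le_mul_of_nonneg_right hba.le (by positivity)
        _ ≤ ε * a * a / 2 := hδ'3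
    have k2 : ε * a * a / 2 < b * a * D := by
      nlinarith [mul_pos (mul_pos ha0 hε) (sub_pos.mpr hb2),
        mul_nonneg (mul_nonneg hb0.le ha0.le) (sub_nonneg.mpr hcon)]
    linarith
  have hcont : ContinuousOn h (Set.Ioi 0) := by
    have hc2 : ContinuousOn (fun a : ℝ => a * ‖Cinv a fδ‖) (Set.Ioi 0) := by
      apply ContinuousOn.mul
      · exact continuousOn_id
      · exact hkc.norm
    exact hc2.congr fun a ha => hval a ha
  -- limit at infinity
  have htop : Tendsto h atTop (𝓝 ‖fδ‖) := by
    rw [tendsto_iff_dist_tendsto_zero]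
    have hub : ∀ a : ℝ, 0 < a → dist (h a) ‖fδ‖ ≤ ‖Q‖ * ‖fδ‖ / a := by
      intro a ha
      have e : (a : ℂ) • Cinv a fδ = fδ - Q (Cinv a fδ) := by
        have := hinv1 a ha fδ
        simp only [add_apply, smul_apply, ContinuousLinearMap.one_def, ContinuousLinearMap.id_apply] at this
        rw [eq_sub_iff_add_eq]
        exact (add_comm _ _).trans this
      have h1 : dist (h a) ‖fδ‖ ≤ ‖(a : ℂ) • Cinv a fδ - fδ‖ := by
        have h2 : h a = ‖(a : ℂ) • Cinv a fδ‖ := by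
          rw [hval a ha, norm_smul, Complex.norm_real, Real.norm_eq_abs, abs_of_pos ha]
        rw [Real.dist_eq, h2]
        exact abs_norm_sub_norm_le _ _
      have h3 : ‖(a : ℂ) • Cinv a fδ - fδ‖ = ‖Q (Cinv a fδ)‖ := by
        rw [e]; simp [norm_sub_rev]
      have h4 : ‖Q (Cinv a fδ)‖ ≤ ‖Q‖ * ‖Cinv a fδ‖ := Q.le_opNorm _
      have h5 : ‖Cinv a fδ‖ ≤ ‖fδ‖ / a := by
        have := hbound a ha fδ
        rw [le_div_iff₀ ha]; linarith [this]
      have h6 : ‖Q‖ * ‖Cinv a fδ‖ ≤ ‖Q‖ * (‖fδ‖ / a) :=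
        mul_le_mul_of_nonneg_left h5 (norm_nonneg Q)
      calc dist (h a) ‖fδ‖ ≤ ‖Q (Cinv a fδ)‖ := h3 ▸ h1
        _ ≤ ‖Q‖ * (‖fδ‖ / a) := le_trans h4 h6
        _ = ‖Q‖ * ‖fδ‖ / a := by ring
    apply squeeze_zero' (g := fun a : ℝ => ‖Q‖ * ‖fδ‖ / a)
    · exact Eventually.of_forall fun a => dist_nonneg
    · filter_upwards [eventually_gt_atTop (0 : ℝ)] with a ha using hub a ha
    · have := tendsto_inv_atTop_zero (𝕜 := ℝ)
      have h2 := this.const_mul (‖Q‖ * ‖fδ‖)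
      simpa [div_eq_mul_inv, mul_zero] using h2
  -- density of range of Q
  have hdQ : ∀ x : H, x ∈ closure (Set.range Q) := by
    have hbot : (LinearMap.range (Q : H →ₗ[ℂ] H))ᗮ = ⊥ := by
      rw [Submodule.eq_bot_iff]
      intro u hu
      have hmem : Q u ∈ LinearMap.range (Q : H →ₗ[ℂ] H) := ⟨u, rfl⟩
      have h1 : (inner ℂ (Q u) u : ℂ) = 0 :=
        (Submodule.mem_orthogonal _ u).mp hu (Q u) hmem
      rw [hQsa] at h1
      exact hker u (inner_self_eq_zero.mp h1)
    have h2 := Submodule.topologicalClosure_eq_top_iff.mpr hbot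
    intro x
    have h3 : x ∈ (LinearMap.range (Q : H →ₗ[ℂ] H)).topologicalClosure := by
      rw [h2]; trivial
    have h4 : x ∈ closure ((LinearMap.range (Q : H →ₗ[ℂ] H) : Set H)) := h3
    simpa [LinearMap.coe_range] using h4
  -- limit at 0⁺
  have htend0 : Tendsto h (𝓝[>] (0 : ℝ)) (𝓝 0) := by
    rw [Metric.tendsto_nhdsWithin_nhds]
    intro ε hε
    obtain ⟨w, hwmem, hwz⟩ : ∃ w ∈ Set.range Q, ‖fδ - w‖ < ε / 2 := by
      have hcl := hdQ fδ
      rw [Metric.mem_closure_iff] at hcl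
      obtain ⟨w, hw, hdw⟩ := hcl (ε / 2) (by positivity)
      exact ⟨w, hw, by rwa [dist_eq_norm] at hdw⟩
    obtain ⟨z, rfl⟩ := hwmem
    refine ⟨ε / (4 * (‖z‖ + 1)), by positivity, ?_⟩
    intro a ha hd
    have ha0 : (0 : ℝ) < a := ha
    rw [Real.dist_eq, sub_zero] at hd
    have had : a < ε / (4 * (‖z‖ + 1)) := lt_of_abs_lt hd
    rw [Real.dist_eq, sub_zero, abs_of_nonneg (hvalnn a ha0), hval a ha0]
    have e1 : Cinv a fδ = Cinv a (fδ - Q z) + Cinv a (Q z) := by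
      rw [← map_add]; congr 1; abel
    have e2 : a * ‖Cinv a (fδ - Q z)‖ ≤ ‖fδ - Q z‖ := hbound a ha0 _
    have e3 : Cinv a (Q z) = z - (a : ℂ) • Cinv a z := by
      have hz : Q z = (Q + (a : ℂ) • 1) z - (a : ℂ) • z := by
        simp only [add_apply, smul_apply, ContinuousLinearMap.one_def, ContinuousLinearMap.id_apply]; module
      rw [hz, map_sub, hinv2 a ha0, map_smul]
    have e4 : a * ‖Cinv a (Q z)‖ ≤ 2 * a * ‖z‖ := by
      rw [e3]
      have t1 : ‖z - (a : ℂ) • Cinv a z‖ ≤ ‖z‖ + ‖(a : ℂ) • Cinv a z‖ := norm_sub_le _ _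
      have t2 : ‖(a : ℂ) • Cinv a z‖ = a * ‖Cinv a z‖ := by
        rw [norm_smul, Complex.norm_real, Real.norm_eq_abs, abs_of_pos ha0]
      have t3 := hbound a ha0 z
      rw [t2] at t1
      nlinarith
    have e5 : a * ‖Cinv a fδ‖ ≤ a * ‖Cinv a (fδ - Q z)‖ + a * ‖Cinv a (Q z)‖ := by
      rw [e1]
      have := norm_add_le (Cinv a (fδ - Q z)) (Cinv a (Q z))
      nlinarith
    have e6 : 2 * a * ‖z‖ < ε / 2 := by
      have hz1 : 0 < ‖z‖ + 1 := by positivity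
      rw [lt_div_iff₀ (by positivity)] at had
      nlinarith [norm_nonneg z]
    linarith
  have htend0' : Tendsto h (𝓝[>] (0 : ℝ)) (𝓝 ‖P fδ‖) := by
    rw [hPfδ, norm_zero]; exact htend0
  -- strict monotonicity
  have hmono : ∀ a b : ℝ, 0 < a → a < b → h a < h b := by
    intro a b ha hab
    have hb : (0 : ℝ) < b := ha.trans hab
    set w := Cinv a (Cinv b fδ) with hw
    have e1 : (Q + (a : ℂ) • 1) w = Cinv b fδ := hinv1 a ha _
    have e2 : fδ = (Q + (b : ℂ) • 1) ((Q + (a : ℂ) • 1) w) := by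
      rw [e1]; exact (hinv1 b hb fδ).symm
    have comm : (Q + (b : ℂ) • 1) ((Q + (a : ℂ) • 1) w)
        = (Q + (a : ℂ) • 1) ((Q + (b : ℂ) • 1) w) := by
      simp only [add_apply, smul_apply, ContinuousLinearMap.one_def, ContinuousLinearMap.id_apply, map_add, map_smul]
      module
    have e3 : Cinv a fδ = (Q + (b : ℂ) • 1) w := by
      conv_lhs => rw [e2, comm]
      exact hinv2 a ha _
    have e4 : Cinv b fδ = (Q + (a : ℂ) • 1) w := e1.symm
    set u := Q w with hu
    set s := ((a * b : ℝ) : ℂ) • w with hs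
    have f1 : (a : ℂ) • ((Q + (b : ℂ) • 1) w) = (a : ℂ) • u + s := by
      simp only [add_apply, smul_apply, ContinuousLinearMap.one_def, ContinuousLinearMap.id_apply, hs, hu, smul_add, smul_smul]
      push_cast
      ring_nf
    have f2 : (b : ℂ) • ((Q + (a : ℂ) • 1) w) = (b : ℂ) • u + s := by
      simp only [add_apply, smul_apply, ContinuousLinearMap.one_def, ContinuousLinearMap.id_apply, hs, hu, smul_add, smul_smul]
      push_cast
      ring_nf
    have g1 : h a = ‖(a : ℂ) • u + s‖ := by
      rw [hval a ha, e3, ← f1, norm_smul, Complex.norm_real, Real.norm_eq_abs,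
        abs_of_pos ha]
    have g2 : h b = ‖(b : ℂ) • u + s‖ := by
      rw [hval b hb, e4, ← f2, norm_smul, Complex.norm_real, Real.norm_eq_abs,
        abs_of_pos hb]
    have hR : 0 ≤ ((inner ℂ u s : ℂ)).re := by
      have : (inner ℂ u s : ℂ) = ((a * b : ℝ) : ℂ) * (inner ℂ (Q w) w : ℂ) := by
        rw [hs, inner_smul_right]
      rw [this, Complex.re_ofReal_mul]
      have := hQpos w
      have hab' : 0 ≤ a * b := le_of_lt (mul_pos ha hb)
      exact mul_nonneg hab' this
    have hune : u ≠ 0 := by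
      intro h0
      have hfs : fδ = s := by
        rw [e2, comm]
        simp only [add_apply, smul_apply, ContinuousLinearMap.one_def, ContinuousLinearMap.id_apply, map_add, map_smul, hu] at h0 ⊢
        rw [h0]
        simp only [map_zero, smul_zero, zero_add, add_zero, hs, smul_smul]
        push_cast
        ring_nf
      have hQf : Q fδ = 0 := by
        rw [hfs, hs, map_smul, ← hu, h0, smul_zero]
      have hAf : adjoint A fδ = 0 := by
        have h5 := hQsa fδ
        rw [hQf, inner_zero_left] at h5
        exact inner_self_eq_zero.mp h5.symm
      exact hfδ0 (hker fδ hAf)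
    have hupos : 0 < ‖u‖ := norm_pos_iff.mpr hune
    have hsq : h a ^ 2 < h b ^ 2 := by
      rw [g1, g2, aux_expand, aux_expand]
      have key : 0 < (b - a) * (b + a) * (‖u‖ * ‖u‖) :=
        mul_pos (mul_pos (sub_pos.mpr hab) (by linarith)) (mul_pos hupos hupos)
      have key2 : 0 ≤ (b - a) * ((inner ℂ u s : ℂ)).re :=
        mul_nonneg (by linarith) hR
      nlinarith [key, key2]
    nlinarith [hvalnn a ha, hvalnn b hb, hsq]
  have hmonoOn : MonotoneOn h (Set.Ioi 0) := by
    intro a ha b hb hab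
    rcases eq_or_lt_of_le hab with rfl | hlt
    · exact le_refl _
    · exact le_of_lt (hmono a b ha hlt)
  -- existence and uniqueness of the solution
  obtain ⟨a1, ha1lt, ha1pos⟩ : ∃ a1, h a1 < C * δ ∧ (0 : ℝ) < a1 := by
    have h1 : ∀ᶠ a in 𝓝[>] (0 : ℝ), h a < C * δ := htend0.eventually_lt_const hCδ
    exact (h1.and self_mem_nhdsWithin).exists
  obtain ⟨a2, ha2gt, ha2lt⟩ : ∃ a2, C * δ < h a2 ∧ a1 < a2 := by
    have h1 : ∀ᶠ a in atTop, C * δ < h a := htop.eventually_const_lt hfδ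
    exact (h1.and (eventually_gt_atTop a1)).exists
  have hsub : Set.Icc a1 a2 ⊆ Set.Ioi (0 : ℝ) := fun x hx => lt_of_lt_of_le ha1pos hx.1
  obtain ⟨a0, ha0mem, ha0⟩ := intermediate_value_Icc (le_of_lt ha2lt) (hcont.mono hsub)
    ⟨le_of_lt ha1lt, le_of_lt ha2gt⟩
  have ha0pos : (0 : ℝ) < a0 := hsub ha0mem
  refine ⟨hcont, hmonoOn, htop, htend0', by rw [hPfδ, norm_zero]; linarith,
    hδC, a0, ⟨ha0pos, ha0⟩, ?_⟩
  rintro x ⟨hx0, hxe⟩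
  rcases lt_trichotomy x a0 with hlt | heq | hgt
  · have := hmono x a0 hx0 hlt
    rw [hxe, ha0] at this
    exact absurd this (lt_irrefl _)
  · exact heq
  · have := hmono a0 x ha0pos hgt
    rw [hxe, ha0] at this
    exact absurd this (lt_irrefl _)
end
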